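/- arXiv:2306.12543 — 3 statements merged into one kernel-verified Lean document; each statement's English description precedes it below -/
import Mathlib

section
/- Let M be a matroid on ground set E and let N be a matroid whose ground set is the set of circuits of M. Assume that whenever C₁ and C₂ are circuits of M with |C₁ ∪ C₂| − r_M(C₁ ∪ C₂) = 2, every circuit C of M with C ⊆ C₁ ∪ C₂ satisfies C ∈ cl_N({C₁, C₂}). Then the function r : 2^E → ℤ defined, for all X ⊆ E, by r(X) = r_M(X) + r_N({C : C is a circuit of M with C ⊆ X}) is the rank function of a matroid L on E, and L is a rank-r_N(E(N)) lift of M. -/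
open Set Matroid
open scoped Matroid

namespace PaperLift

variable {α : Type} {β : Type}

/-- A circuit of a matroid: a minimal dependent set. -/
def Circuit (M : Matroid α) (C : Set α) : Prop :=
  M.Dep C ∧ ∀ D, D ⊂ C → M.Indep D

/-- The rank of a set in a matroid: the supremum of cardinalities of independent subsets. -/
noncomputable def rk (M : Matroid α) (X : Set α) : ℕ :=
  sSup {n | ∃ I, M.Indep I ∧ I ⊆ X ∧ I.ncard = n}

/-- The rank of a matroid. -/
noncomputable def rank (M : Matroid α) : ℕ := rk M M.E

/-- Deletion of a set from a matroid. -/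
def delete (M : Matroid α) (D : Set α) : Matroid α := M ↾ (M.E \ D)

/-- Contraction of a set in a matroid, defined by duality. -/
noncomputable def contract (M : Matroid α) (C : Set α) : Matroid α := ((M✶) ↾ (M.E \ C))✶

/-- A hyperplane: a maximal proper flat. -/
def Hyperplane (M : Matroid α) (H : Set α) : Prop :=
  M.IsFlat H ∧ H ≠ M.E ∧ ∀ F, M.IsFlat F → H ⊂ F → F = M.E

/-- A circuit-hyperplane: a circuit that is also a hyperplane. -/
def CircuitHyperplane (M : Matroid α) (C : Set α) : Prop :=
  Circuit M C ∧ Hyperplane M C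

/-- `L` is a lift of `M`: there is a matroid `K` on a ground set `E ∪ F`, with `F` disjoint
from `E = M.E`, such that `M = K / F` and `L = K \ F` (up to the canonical embedding). -/
def IsLiftOf (L M : Matroid α) : Prop :=
  L.E = M.E ∧ ∃ (β : Type) (K : Matroid (α ⊕ β)) (F : Set (α ⊕ β)),
    Disjoint (Sum.inl '' M.E) F ∧ K.E = Sum.inl '' M.E ∪ F ∧
    contract K F = M.map Sum.inl Sum.inl_injective.injOn ∧
    delete K F = L.map Sum.inl Sum.inl_injective.injOn

/-- `N`, a matroid whose ground set is the set of circuits of `M`, satisfies the lift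
condition for `M`. -/
def LiftCondition (M : Matroid α) (N : Matroid (Set α)) : Prop :=
  N.E = {C | Circuit M C} ∧
  ∀ C₁ C₂, Circuit M C₁ → Circuit M C₂ →
    (C₁ ∪ C₂).ncard = rk M (C₁ ∪ C₂) + 2 →
    ∀ C, Circuit M C → C ⊆ C₁ ∪ C₂ → C ∈ N.closure {C₁, C₂}

/-- `L` has the rank function of the lift `M^N` of `M` constructed from `N`. -/
def IsLiftMatroid (M : Matroid α) (N : Matroid (Set α)) (L : Matroid α) : Prop :=
  L.E = M.E ∧ ∀ X ⊆ M.E, rk L X = rk M X + rk N {C | Circuit M C ∧ C ⊆ X}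

/-- Matroid isomorphism: a bijection between ground sets preserving independence
in both directions. -/
def Iso (M : Matroid α) (N : Matroid β) : Prop :=
  ∃ e : α → β, InjOn e M.E ∧ e '' M.E = N.E ∧ ∀ I ⊆ M.E, (M.Indep I ↔ N.Indep (e '' I))

/-- Representability of a matroid over a field `F`. -/
def Representable (M : Matroid α) (F : Type) [Field F] : Prop :=
  ∃ (W : Type) (_ : AddCommGroup W) (_ : Module F W) (φ : α → W),
    ∀ I ⊆ M.E, (M.Indep I ↔ InjOn φ I ∧ LinearIndependent F (fun e : I => φ e))

/-- A rank-`r` matroid is sparse paving if every `r`-element subset of the ground set is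
either a base or a circuit-hyperplane. -/
def SparsePaving (M : Matroid α) : Prop :=
  ∀ S ⊆ M.E, S.ncard = rank M → (M.IsBase S ∨ CircuitHyperplane M S)

/-- A perfect collection of circuits. -/
def Perfect (M : Matroid α) (Cs : Set (Set α)) : Prop :=
  Cs.Finite ∧ (∀ C ∈ Cs, Circuit M C) ∧
  (⋃₀ Cs).ncard = rk M (⋃₀ Cs) + Cs.ncard ∧
  ∀ C ∈ Cs, ¬ C ⊆ ⋃₀ (Cs \ {C})

/-- A linear class of circuits. -/
def LinearClass (M : Matroid α) (𝒞 : Set (Set α)) : Prop :=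
  (∀ C ∈ 𝒞, Circuit M C) ∧
  ∀ C₁ ∈ 𝒞, ∀ C₂ ∈ 𝒞, (C₁ ∪ C₂).ncard = rk M (C₁ ∪ C₂) + 2 →
    ∀ C, Circuit M C → C ⊆ C₁ ∪ C₂ → C ∈ 𝒞

/-- The circulant sets `C_i ⊆ [2t]` from the construction of `K(r,t)`. -/
def Ci (r t i : ℕ) : Set ℕ :=
  (fun k => (k + 2 * (i - 1) - 1) % (2 * t) + 1) '' (Set.Icc 1 (r - 2))

/-- The family `𝒞'(r,t)`. -/
def CC' (r t : ℕ) : Set (Set ℕ) :=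
  (fun i => Ci r t i ∪ {2 * t + 1, 2 * t + 2}) '' (Set.Icc 1 t)

/-- The family `𝒞''(r,t)`. -/
def CC'' (r t : ℕ) : Set (Set ℕ) :=
  (fun i => Ci r t i ∪ Ci r t (i + 1)) '' (Set.Icc 1 (t - 1))

/-- `K` is the matroid `K(r,t)`: a rank-`r` matroid on `[2t+2]` in which every `r`-element
subset is a base or a circuit-hyperplane, whose circuit-hyperplanes are exactly the members
of `𝒞'(r,t) ∪ 𝒞''(r,t)`. -/
def IsKrt (r t : ℕ) (K : Matroid ℕ) : Prop :=
  K.E = Set.Icc 1 (2 * t + 2) ∧ rank K = r ∧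
  (∀ S ⊆ K.E, S.ncard = r → (K.IsBase S ∨ CircuitHyperplane K S)) ∧
  (∀ S, CircuitHyperplane K S ↔ S ∈ CC' r t ∪ CC'' r t)

/-- A group partition: a partition of the non-identity elements such that each part
together with the identity is a subgroup. -/
def GroupPartition (Γ : Type) [Group Γ] (𝒜 : Set (Set Γ)) : Prop :=
  (∀ A ∈ 𝒜, A.Nonempty) ∧ (⋃₀ 𝒜 = {(1 : Γ)}ᶜ) ∧
  (∀ A ∈ 𝒜, ∀ B ∈ 𝒜, A ≠ B → Disjoint A B) ∧
  (∀ A ∈ 𝒜, ∃ H : Subgroup Γ, (H : Set Γ) = insert 1 A)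


section RkTheory

variable {Q : Matroid α} {X Y I J B : Set α} {e : α}

lemma rk_le_of_forall {n : ℕ} (h : ∀ I, Q.Indep I → I ⊆ X → I.ncard ≤ n) : rk Q X ≤ n := by
  have hne : {n | ∃ I, Q.Indep I ∧ I ⊆ X ∧ I.ncard = n}.Nonempty :=
    ⟨0, ∅, Q.empty_indep, empty_subset X, ncard_empty α⟩
  refine csSup_le hne ?_
  rintro m ⟨I, hI, hIX, rfl⟩
  exact h I hI hIX

lemma le_rk_of_indep (hfin : Q.E.Finite) (hI : Q.Indep I) (hIX : I ⊆ X) :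
    I.ncard ≤ rk Q X := by
  have hbdd : BddAbove {n | ∃ I, Q.Indep I ∧ I ⊆ X ∧ I.ncard = n} := by
    refine ⟨Q.E.ncard, mem_upperBounds.2 ?_⟩
    rintro m ⟨J, hJ, hJX, rfl⟩
    exact ncard_le_ncard hJ.subset_ground hfin
  exact le_csSup hbdd ⟨I, hI, hIX, rfl⟩

lemma rk_eq_ncard_basis' (hfin : Q.E.Finite) (hI : Q.IsBasis' I X) : rk Q X = I.ncard := by
  refine le_antisymm (rk_le_of_forall fun J hJ hJX => ?_) (le_rk_of_indep hfin hI.indep hI.subset)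
  have hIb : (Q ↾ X).IsBase I := isBase_restrict_iff'.2 hI
  have hJi : (Q ↾ X).Indep J := restrict_indep_iff.2 ⟨hJ, hJX⟩
  obtain ⟨B, hB, hJB⟩ := hJi.exists_isBase_superset
  have hcard := hB.ncard_eq_ncard_of_isBase hIb
  have hBfin : B.Finite := hfin.subset (hB.indep.of_restrict).subset_ground
  exact (ncard_le_ncard hJB hBfin).trans hcard.le

lemma rk_mono (hfin : Q.E.Finite) (h : X ⊆ Y) : rk Q X ≤ rk Q Y :=
  rk_le_of_forall fun I hI hIX => le_rk_of_indep hfin hI (hIX.trans h)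

lemma rk_inter_ground (hfin : Q.E.Finite) : rk Q (X ∩ Q.E) = rk Q X := by
  refine le_antisymm (rk_mono hfin inter_subset_left) (rk_le_of_forall fun I hI hIX => ?_)
  exact le_rk_of_indep hfin hI (subset_inter hIX hI.subset_ground)

lemma rk_indep (hfin : Q.E.Finite) (hI : Q.Indep I) : rk Q I = I.ncard :=
  rk_eq_ncard_basis' hfin hI.isBasis_self.isBasis'

lemma rk_le_ncard (hfin : Q.E.Finite) (hX : X.Finite) : rk Q X ≤ X.ncard :=
  rk_le_of_forall fun I _ hIX => ncard_le_ncard hIX hX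

lemma rk_closure_eq (hfin : Q.E.Finite) : rk Q (Q.closure X) = rk Q X := by
  obtain ⟨I, hI⟩ := Q.exists_isBasis' X
  rw [rk_eq_ncard_basis' hfin hI, rk_eq_ncard_basis' hfin hI.isBasis_closure_right.isBasis']

lemma rk_le_of_subset_closure (hfin : Q.E.Finite) (h : X ⊆ Q.closure Y) :
    rk Q X ≤ rk Q Y :=
  (rk_mono hfin h).trans (rk_closure_eq hfin).le

lemma rk_insert_eq_of_mem_closure (hfin : Q.E.Finite) (he : e ∈ Q.closure X) :
    rk Q (insert e X) = rk Q X := by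
  rw [← rk_closure_eq hfin (X := insert e X), closure_insert_eq_of_mem_closure he,
    rk_closure_eq hfin]

lemma rk_insert_eq_add_one (hfin : Q.E.Finite) (heE : e ∈ Q.E) (he : e ∉ Q.closure X) :
    rk Q (insert e X) = rk Q X + 1 := by
  obtain ⟨I, hI⟩ := Q.exists_isBasis' X
  have hcl : Q.closure I = Q.closure X := hI.closure_eq_closure
  have heI : e ∉ I := fun h =>
    he (mem_of_mem_of_subset (mem_of_mem_of_subset h
      (subset_inter hI.subset hI.indep.subset_ground)) (Q.inter_ground_subset_closure X))
  have hind : Q.Indep (insert e I) := by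
    rw [hI.indep.insert_indep_iff_of_notMem heI]
    exact ⟨heE, by rwa [hcl]⟩
  have hb : Q.IsBasis (insert e I) (insert e (X ∩ Q.E)) :=
    (isBasis'_iff_isBasis_inter_ground.1 hI).insert_isBasis_insert hind
  have h1 : rk Q (insert e X) = (insert e I).ncard := by
    rw [← rk_inter_ground hfin, insert_inter_of_mem heE, rk_eq_ncard_basis' hfin hb.isBasis']
  rw [h1, ncard_insert_of_notMem heI (hfin.subset hI.indep.subset_ground),
    rk_eq_ncard_basis' hfin hI]

lemma rk_insert_eq_of_not_mem_ground (hfin : Q.E.Finite) (heE : e ∉ Q.E) :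
    rk Q (insert e X) = rk Q X := by
  rw [← rk_inter_ground hfin, insert_inter_of_notMem heE, rk_inter_ground hfin]

lemma rk_insert_le (hfin : Q.E.Finite) : rk Q (insert e X) ≤ rk Q X + 1 := by
  by_cases he : e ∈ Q.closure X
  · rw [rk_insert_eq_of_mem_closure hfin he]; exact Nat.le_succ _
  by_cases heE : e ∈ Q.E
  · rw [rk_insert_eq_add_one hfin heE he]
  · rw [rk_insert_eq_of_not_mem_ground hfin heE]; exact Nat.le_succ _

lemma rk_le_rk_insert (hfin : Q.E.Finite) : rk Q X ≤ rk Q (insert e X) :=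
  rk_mono hfin (subset_insert _ _)

lemma rk_insert_submod (hfin : Q.E.Finite) (hXY : X ⊆ Y) :
    rk Q (insert e Y) + rk Q X ≤ rk Q Y + rk Q (insert e X) := by
  by_cases heE : e ∈ Q.E
  · by_cases he : e ∈ Q.closure X
    · rw [rk_insert_eq_of_mem_closure hfin he,
        rk_insert_eq_of_mem_closure hfin (Q.closure_subset_closure hXY he)]
    · by_cases he' : e ∈ Q.closure Y
      · rw [rk_insert_eq_of_mem_closure hfin he', rk_insert_eq_add_one hfin heE he]
        omega
      · rw [rk_insert_eq_add_one hfin heE he, rk_insert_eq_add_one hfin heE he']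
        omega
  · rw [rk_insert_eq_of_not_mem_ground hfin heE, rk_insert_eq_of_not_mem_ground hfin heE]

lemma mem_closure_of_rk_le (hfin : Q.E.Finite) (hXY : X ⊆ Y) (h : rk Q Y ≤ rk Q X)
    (hx : e ∈ Y) (hxE : e ∈ Q.E) : e ∈ Q.closure X := by
  by_contra hcl
  have h1 := rk_insert_eq_add_one hfin hxE hcl
  have hle : rk Q (insert e X) ≤ rk Q Y := rk_mono hfin (insert_subset hx hXY)
  omega

lemma ncard_base_eq_rank (hfin : Q.E.Finite) (hB : Q.IsBase B) : B.ncard = rank Q :=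
  (rk_eq_ncard_basis' hfin hB.isBasis_ground.isBasis').symm

lemma rank_le_of_rk (hfin : Q.E.Finite) : rk Q X ≤ rank Q := by
  rw [← rk_inter_ground hfin (X := X)]
  exact rk_mono hfin inter_subset_right

lemma exists_base_subset_iff_rk (hfin : Q.E.Finite) (hX : X ⊆ Q.E) :
    (∃ B, Q.IsBase B ∧ B ⊆ X) ↔ rk Q X = rank Q := by
  constructor
  · rintro ⟨B, hB, hBX⟩
    refine le_antisymm (rank_le_of_rk hfin) ?_
    rw [← ncard_base_eq_rank hfin hB]
    exact le_rk_of_indep hfin hB.indep hBX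
  · intro h
    obtain ⟨I, hI⟩ := Q.exists_isBasis' X
    obtain ⟨B, hB, hIB⟩ := hI.indep.exists_isBase_superset
    have h1 : I.ncard = rank Q := by rw [← rk_eq_ncard_basis' hfin hI, h]
    have h2 : B.ncard ≤ I.ncard := by rw [h1, ncard_base_eq_rank hfin hB]
    have : I = B := eq_of_subset_of_ncard_le hIB h2 (hfin.subset hB.subset_ground)
    exact ⟨B, hB, this ▸ hI.subset⟩

lemma rk_empty (hfin : Q.E.Finite) : rk Q ∅ = 0 :=
  Nat.le_zero.1 (by simpa using rk_le_ncard hfin finite_empty)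

end RkTheory
section Circuits

variable {M : Matroid α} {C C₁ C₂ D X S : Set α} {e x : α}

lemma Circuit.subset_ground (hC : Circuit M C) : C ⊆ M.E := hC.1.subset_ground

lemma Circuit.finite (hM : M.E.Finite) (hC : Circuit M C) : C.Finite :=
  hM.subset hC.subset_ground

lemma Circuit.eq_of_subset (hC₁ : Circuit M C₁) (hC₂ : Circuit M C₂) (h : C₁ ⊆ C₂) :
    C₁ = C₂ := by
  rcases h.eq_or_ssubset with h' | h'
  · exact h'
  · exact absurd (hC₂.2 _ h') hC₁.1.not_indep

lemma Circuit.diff_ssubset_nonempty (hC₁ : Circuit M C₁) (hC₂ : Circuit M C₂)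
    (h : C₁ ≠ C₂) : (C₁ \ C₂).Nonempty :=
  diff_nonempty.2 fun hsub => h (hC₁.eq_of_subset hC₂ hsub)

lemma Circuit.diff_indep (hC : Circuit M C) (he : e ∈ C) : M.Indep (C \ {e}) :=
  hC.2 _ (sdiff_singleton_ssubset.2 he)

lemma Circuit.mem_closure_diff (hC : Circuit M C) (he : e ∈ C) :
    e ∈ M.closure (C \ {e}) := by
  have hi := hC.diff_indep he
  have hdep : M.Dep (insert e (C \ {e})) := by
    rw [insert_diff_singleton, insert_eq_of_mem he]; exact hC.1
  exact ((hi.insert_dep_iff).1 hdep).1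

lemma exists_circuit_subset_of_dep (hM : M.E.Finite) (hD : M.Dep S) :
    ∃ C, Circuit M C ∧ C ⊆ S := by
  have hfin : S.Finite := hM.subset hD.subset_ground
  obtain ⟨n, hn⟩ : ∃ n, S.ncard = n := ⟨_, rfl⟩
  induction n using Nat.strong_induction_on generalizing S with
  | _ n IH =>
    by_cases h : ∀ T, T ⊂ S → M.Indep T
    · exact ⟨S, ⟨hD, h⟩, subset_rfl⟩
    · push_neg at h
      obtain ⟨T, hTS, hT⟩ := h
      have hTdep : M.Dep T := ⟨hT, hTS.subset.trans hD.subset_ground⟩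
      obtain ⟨C, hC, hCT⟩ := IH T.ncard (hn ▸ ncard_lt_ncard hTS hfin) hTdep
        (hfin.subset hTS.subset) rfl
      exact ⟨C, hC, hCT.trans hTS.subset⟩

lemma exists_circuit_of_mem_closure (hM : M.E.Finite) (he : e ∈ M.closure X) (heX : e ∉ X) :
    ∃ C, Circuit M C ∧ e ∈ C ∧ C ⊆ insert e X := by
  obtain ⟨I, hI⟩ := M.exists_isBasis' X
  have hcl : e ∈ M.closure I := by rwa [hI.closure_eq_closure]
  have heI : e ∉ I := fun h => heX (hI.subset h)
  have hdep : M.Dep (insert e I) := hI.indep.insert_dep_iff.2 ⟨hcl, heI⟩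
  obtain ⟨C, hC, hCsub⟩ := exists_circuit_subset_of_dep hM hdep
  have heC : e ∈ C := by
    by_contra h
    exact hC.1.not_indep (hI.indep.subset fun x hx =>
      ((hCsub hx).resolve_left (fun h' => h (h' ▸ hx))))
  exact ⟨C, hC, heC, hCsub.trans (insert_subset_insert hI.subset)⟩

lemma two_circuits_rk (hM : M.E.Finite) (hC₁ : Circuit M C₁) (hC₂ : Circuit M C₂)
    (hne : C₁ ≠ C₂) (h₁ : C₁ ⊆ X) (h₂ : C₂ ⊆ X) (hXE : X ⊆ M.E) :
    rk M X + 2 ≤ X.ncard := by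
  obtain ⟨I, hI⟩ := M.exists_isBasis' X
  have hIfin : I.Finite := hM.subset hI.indep.subset_ground
  have hXfin : X.Finite := hM.subset hXE
  have hrk : rk M X = I.ncard := rk_eq_ncard_basis' hM hI
  have h1 : ¬ C₁ ⊆ I := fun h => hC₁.1.not_indep (hI.indep.subset h)
  have h2 : ¬ C₂ ⊆ I := fun h => hC₂.1.not_indep (hI.indep.subset h)
  obtain ⟨x₁, hx₁C, hx₁I⟩ := not_subset.1 h1
  by_cases hsingle : (C₁ ∪ C₂) \ I ⊆ {x₁}
  · exfalso
    -- bad case : C₁ \ {x₁} ⊆ I and C₂ \ {x₁} ⊆ I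
    have hC₁I : C₁ \ {x₁} ⊆ I := by
      intro z hz
      by_contra hzI
      have : z ∈ (C₁ ∪ C₂) \ I := ⟨Or.inl hz.1, hzI⟩
      exact hz.2 (hsingle this)
    have hC₂I : C₂ \ {x₁} ⊆ I := by
      intro z hz
      by_contra hzI
      have : z ∈ (C₁ ∪ C₂) \ I := ⟨Or.inr hz.1, hzI⟩
      exact hz.2 (hsingle this)
    obtain ⟨y, hyC₂, hyC₁⟩ := hC₂.diff_ssubset_nonempty hC₁ (Ne.symm hne)
    have hyx : y ≠ x₁ := fun h => hyC₁ (h ▸ hx₁C)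
    have hyI : y ∈ I := hC₂I ⟨hyC₂, hyx⟩
    have hx₁cl : x₁ ∈ M.closure (I \ {y}) := by
      refine mem_of_mem_of_subset (hC₁.mem_closure_diff hx₁C) (M.closure_subset_closure ?_)
      intro z hz
      exact ⟨hC₁I hz, fun h => hyC₁ (h ▸ hz.1)⟩
    have hy1 : y ∈ M.closure (insert x₁ (I \ {y})) := by
      refine mem_of_mem_of_subset (hC₂.mem_closure_diff hyC₂) (M.closure_subset_closure ?_)
      intro z hz
      rcases eq_or_ne z x₁ with rfl | hzx
      · exact mem_insert _ _
      · exact Or.inr ⟨hC₂I ⟨hz.1, hzx⟩, fun h => hz.2 (h ▸ rfl)⟩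
    rw [closure_insert_eq_of_mem_closure hx₁cl] at hy1
    exact hI.indep.notMem_closure_diff_of_mem hyI hy1
  · obtain ⟨x₂, hx₂, hx₂ne⟩ := not_subset.1 hsingle
    have hx₁mem : x₁ ∈ (C₁ ∪ C₂) \ I := ⟨Or.inl hx₁C, hx₁I⟩
    have hsub : insert x₁ (insert x₂ I) ⊆ X := by
      refine insert_subset (h₁ hx₁C) (insert_subset ?_ hI.subset)
      rcases hx₂.1 with h | h
      · exact h₁ h
      · exact h₂ h
    have hcard : (insert x₁ (insert x₂ I)).ncard = I.ncard + 2 := by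
      have hx₁ni : x₁ ∉ insert x₂ I := by
        rintro (rfl | h)
        · exact hx₂ne rfl
        · exact hx₁I h
      rw [ncard_insert_of_notMem hx₁ni ((hIfin.insert x₂)),
        ncard_insert_of_notMem hx₂.2 hIfin]
    have := ncard_le_ncard hsub hXfin
    omega

lemma circuit_elimination (hM : M.E.Finite) (hC₁ : Circuit M C₁) (hC₂ : Circuit M C₂)
    (hne : C₁ ≠ C₂) (he₁ : e ∈ C₁) (he₂ : e ∈ C₂) :
    ∃ D, Circuit M D ∧ D ⊆ (C₁ ∪ C₂) \ {e} := by
  set U := C₁ ∪ C₂ with hU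
  have hUE : U ⊆ M.E := union_subset hC₁.subset_ground hC₂.subset_ground
  have hUfin : U.Finite := hM.subset hUE
  have h2 : rk M U + 2 ≤ U.ncard := two_circuits_rk hM hC₁ hC₂ hne subset_union_left
    subset_union_right hUE
  have hecl : e ∈ M.closure (U \ {e}) :=
    mem_of_mem_of_subset (hC₁.mem_closure_diff he₁)
      (M.closure_subset_closure (diff_subset_diff_left subset_union_left))
  have hrk : rk M (U \ {e}) = rk M U := by
    rw [← rk_insert_eq_of_mem_closure hM hecl, insert_diff_singleton,
      insert_eq_of_mem (mem_union_left _ he₁)]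
  have hcard : (U \ {e}).ncard = U.ncard - 1 :=
    ncard_diff_singleton_of_mem (mem_union_left _ he₁)
  have hdep : M.Dep (U \ {e}) := by
    rw [← not_indep_iff (diff_subset.trans hUE)]
    intro hind
    have := rk_indep hM hind
    omega
  exact exists_circuit_subset_of_dep hM hdep

end Circuits
section LemA

variable {M : Matroid α} {N : Matroid (Set α)} {C C₁ C₂ X : Set α} {e : α}

lemma Circuit.mem_NE (hN : LiftCondition M N) (hC : Circuit M C) : C ∈ N.E := by
  rw [hN.1]; exact hC

lemma lemA (hM : M.E.Finite) (hN : LiftCondition M N) :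
    ∀ n C₁ C₂ e, (C₁ ∪ C₂).ncard = n → Circuit M C₁ → Circuit M C₂ → e ∈ C₁ → e ∈ C₂ →
      C₂ ∈ N.closure ({C | Circuit M C ∧ C ⊆ (C₁ ∪ C₂) \ {e}} ∪ {C₁}) := by
  intro n
  induction n using Nat.strong_induction_on with
  | _ n IH =>
  intro C₁ C₂ e hn hC₁ hC₂ he₁ he₂
  have hEsub : {C | Circuit M C ∧ C ⊆ (C₁ ∪ C₂) \ {e}} ∪ {C₁} ⊆ N.E := by
    rintro Z (hZ | rfl)
    · exact hZ.1.mem_NE hN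
    · exact hC₁.mem_NE hN
  by_cases h12 : C₁ = C₂
  · subst h12
    exact mem_of_mem_of_subset (Or.inr rfl) (N.subset_closure _ hEsub)
  have hUE : C₁ ∪ C₂ ⊆ M.E := union_subset hC₁.subset_ground hC₂.subset_ground
  have hUfin : (C₁ ∪ C₂).Finite := hM.subset hUE
  have hge2 : rk M (C₁ ∪ C₂) + 2 ≤ (C₁ ∪ C₂).ncard :=
    two_circuits_rk hM hC₁ hC₂ h12 subset_union_left subset_union_right hUE
  by_cases hn2 : (C₁ ∪ C₂).ncard = rk M (C₁ ∪ C₂) + 2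
  · -- base case : nullity 2
    obtain ⟨D, hD, hDsub⟩ := circuit_elimination hM hC₁ hC₂ h12 he₁ he₂
    have heD : e ∉ D := fun h => (hDsub h).2 rfl
    have hDne : C₁ ≠ D := fun h => heD (h ▸ he₁)
    have hCD : C₁ ∪ D = C₁ ∪ C₂ := by
      refine Subset.antisymm (union_subset subset_union_left (hDsub.trans diff_subset)) ?_
      intro x hx
      by_contra hx'
      have hxC₁ : x ∉ C₁ := fun h => hx' (Or.inl h)
      have hxD : x ∉ D := fun h => hx' (Or.inr h)
      have hxC₂ : x ∈ C₂ := hx.resolve_left hxC₁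
      have hsubU : (C₁ ∪ C₂) \ {x} ⊆ M.E := diff_subset.trans hUE
      have h2' : rk M ((C₁ ∪ C₂) \ {x}) + 2 ≤ ((C₁ ∪ C₂) \ {x}).ncard :=
        two_circuits_rk hM hC₁ hD hDne (subset_diff_singleton subset_union_left hxC₁)
          (subset_diff_singleton (hDsub.trans diff_subset) hxD) hsubU
      have hxcl : x ∈ M.closure ((C₁ ∪ C₂) \ {x}) :=
        mem_of_mem_of_subset (hC₂.mem_closure_diff hxC₂)
          (M.closure_subset_closure (diff_subset_diff_left subset_union_right))
      have hrkx : rk M ((C₁ ∪ C₂) \ {x}) = rk M (C₁ ∪ C₂) := by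
        rw [← rk_insert_eq_of_mem_closure hM hxcl, insert_diff_singleton,
          insert_eq_of_mem hx]
      have hcardx : ((C₁ ∪ C₂) \ {x}).ncard = (C₁ ∪ C₂).ncard - 1 :=
        ncard_diff_singleton_of_mem hx
      omega
    have hcond := hN.2 C₁ D hC₁ hD (by rw [hCD]; exact hn2) C₂ hC₂
      (by rw [hCD]; exact subset_union_right)
    refine mem_of_mem_of_subset hcond (N.closure_subset_closure ?_)
    rintro Z (rfl | rfl)
    · exact Or.inr rfl
    · exact Or.inl ⟨hD, hDsub⟩
  · -- inductive step : nullity ≥ 3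
    have hn3 : rk M (C₁ ∪ C₂) + 3 ≤ (C₁ ∪ C₂).ncard := by omega
    have hA : (C₁ \ C₂).Nonempty := hC₁.diff_ssubset_nonempty hC₂ h12
    have hB : (C₂ \ C₁).Nonempty := hC₂.diff_ssubset_nonempty hC₁ (Ne.symm h12)
    -- rank facts about U \ {e}
    have hecl : e ∈ M.closure ((C₁ ∪ C₂) \ {e}) :=
      mem_of_mem_of_subset (hC₁.mem_closure_diff he₁)
        (M.closure_subset_closure (diff_subset_diff_left subset_union_left))
    have hrkUe : rk M ((C₁ ∪ C₂) \ {e}) = rk M (C₁ ∪ C₂) := by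
      rw [← rk_insert_eq_of_mem_closure hM hecl, insert_diff_singleton,
        insert_eq_of_mem (mem_union_left _ he₁)]
    have hcardUe : ((C₁ ∪ C₂) \ {e}).ncard = (C₁ ∪ C₂).ncard - 1 :=
      ncard_diff_singleton_of_mem (mem_union_left _ he₁)
    have hbadFalse : ¬(∀ C₃, Circuit M C₃ → e ∈ C₃ → C₃ ⊆ C₁ ∪ C₂ →
        (C₁ \ C₂ ⊆ C₃ ∨ C₂ \ C₁ ⊆ C₃)) := by
      intro hbad
      have hmeets : ∀ D, Circuit M D → D ⊆ (C₁ ∪ C₂) \ {e} →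
          (D ∩ (C₁ \ C₂)).Nonempty ∧ (D ∩ (C₂ \ C₁)).Nonempty := by
        intro D hD hDsub
        constructor
        · rw [nonempty_iff_ne_empty]; intro hemp
          have hsub : D ⊆ C₂ \ {e} := by
            intro x hx
            have hxU := hDsub hx
            have hxA : x ∉ C₁ \ C₂ := fun h =>
              (eq_empty_iff_forall_notMem.1 hemp x) ⟨hx, h⟩
            refine ⟨?_, hxU.2⟩
            rcases hxU.1 with h | h
            · by_contra h2; exact hxA ⟨h, h2⟩
            · exact h
          exact hD.1.not_indep ((hC₂.diff_indep he₂).subset hsub)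
        · rw [nonempty_iff_ne_empty]; intro hemp
          have hsub : D ⊆ C₁ \ {e} := by
            intro x hx
            have hxU := hDsub hx
            have hxB : x ∉ C₂ \ C₁ := fun h =>
              (eq_empty_iff_forall_notMem.1 hemp x) ⟨hx, h⟩
            refine ⟨?_, hxU.2⟩
            rcases hxU.1 with h | h
            · exact h
            · by_contra h2; exact hxB ⟨h, h2⟩
          exact hD.1.not_indep ((hC₁.diff_indep he₁).subset hsub)
      have hdep1 : M.Dep ((C₁ ∪ C₂) \ {e}) := by
        rw [← not_indep_iff (diff_subset.trans hUE)]
        intro hind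
        have := rk_indep hM hind
        omega
      obtain ⟨D₀, hD₀, hD₀sub⟩ := exists_circuit_subset_of_dep hM hdep1
      have hfound : ∃ D f g, Circuit M D ∧ D ⊆ (C₁ ∪ C₂) \ {e} ∧
          ((f ∈ C₁ \ C₂ ∧ f ∉ D ∧ g ∈ D ∩ (C₂ \ C₁)) ∨
           (g ∈ C₂ \ C₁ ∧ g ∉ D ∧ f ∈ D ∩ (C₁ \ C₂))) := by
        by_cases hAD : C₁ \ C₂ ⊆ D₀
        · by_cases hBD : C₂ \ C₁ ⊆ D₀
          · obtain ⟨a, ha⟩ := hA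
            have hae : a ≠ e := fun h => ha.2 (h ▸ he₂)
            have hdep2 : M.Dep (((C₁ ∪ C₂) \ {e}) \ {a}) := by
              rw [← not_indep_iff ((diff_subset.trans diff_subset).trans hUE)]
              intro hind
              have h1 := rk_indep hM hind
              have h2 : (((C₁ ∪ C₂) \ {e}) \ {a}).ncard = ((C₁ ∪ C₂) \ {e}).ncard - 1 :=
                ncard_diff_singleton_of_mem ⟨Or.inl ha.1, hae⟩
              have h3 : rk M (((C₁ ∪ C₂) \ {e}) \ {a}) ≤ rk M ((C₁ ∪ C₂) \ {e}) :=
                rk_mono hM diff_subset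
              omega
            obtain ⟨D₂, hD₂, hD₂sub⟩ := exists_circuit_subset_of_dep hM hdep2
            have haD₂ : a ∉ D₂ := fun h => (hD₂sub h).2 rfl
            have hD₂sub' : D₂ ⊆ (C₁ ∪ C₂) \ {e} := hD₂sub.trans diff_subset
            obtain ⟨g, hg⟩ := (hmeets D₂ hD₂ hD₂sub').2
            exact ⟨D₂, a, g, hD₂, hD₂sub', Or.inl ⟨ha, haD₂, hg⟩⟩
          · obtain ⟨g, hgB, hgD⟩ := not_subset.1 hBD
            obtain ⟨f, hf⟩ := (hmeets D₀ hD₀ hD₀sub).1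
            exact ⟨D₀, f, g, hD₀, hD₀sub, Or.inr ⟨hgB, hgD, hf⟩⟩
        · obtain ⟨f, hfA, hfD⟩ := not_subset.1 hAD
          obtain ⟨g, hg⟩ := (hmeets D₀ hD₀ hD₀sub).2
          exact ⟨D₀, f, g, hD₀, hD₀sub, Or.inl ⟨hfA, hfD, hg⟩⟩
      obtain ⟨D, f, g, hD, hDsub, hcase⟩ := hfound
      rcases hcase with ⟨hfA, hfD, hgD⟩ | ⟨hgB, hgD, hfD⟩
      · -- f ∈ (C₁ \ C₂) \ D, g ∈ D ∩ (C₂ \ C₁)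
        have hgB : g ∈ C₂ \ C₁ := hgD.2
        have hfe : f ≠ e := fun h => hfA.2 (h ▸ he₂)
        have hge : g ≠ e := fun h => hgB.2 (h ▸ he₁)
        have hDg : D \ {g} ⊆ (C₁ ∪ C₂) \ {e, f, g} := by
          intro x hx
          have hxU := hDsub hx.1
          refine ⟨hxU.1, ?_⟩
          simp only [mem_insert_iff, mem_singleton_iff]
          push_neg
          refine ⟨fun h => hxU.2 h, fun h => hfD (h ▸ hx.1), fun h => hx.2 (h ▸ rfl)⟩
        have h1 : g ∈ M.closure ((C₁ ∪ C₂) \ {e, f, g}) :=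
          mem_of_mem_of_subset (hD.mem_closure_diff hgD.1) (M.closure_subset_closure hDg)
        have h2 : C₂ \ {e} ⊆ insert g ((C₁ ∪ C₂) \ {e, f, g}) := by
          intro x hx
          rcases eq_or_ne x g with rfl | hxg
          · exact mem_insert _ _
          · refine Or.inr ⟨Or.inr hx.1, ?_⟩
            simp only [mem_insert_iff, mem_singleton_iff]
            push_neg
            exact ⟨fun h => hx.2 (h ▸ rfl), fun h => hfA.2 (h ▸ hx.1), hxg⟩
        have h3 : e ∈ M.closure (insert g ((C₁ ∪ C₂) \ {e, f, g})) :=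
          mem_of_mem_of_subset (hC₂.mem_closure_diff he₂) (M.closure_subset_closure h2)
        rw [closure_insert_eq_of_mem_closure h1] at h3
        have heV : e ∉ (C₁ ∪ C₂) \ {e, f, g} := fun h => h.2 (Or.inl rfl)
        obtain ⟨C₃, hC₃, heC₃, hC₃sub⟩ := exists_circuit_of_mem_closure hM h3 heV
        have hC₃U : C₃ ⊆ C₁ ∪ C₂ :=
          hC₃sub.trans (insert_subset (Or.inl he₁) diff_subset)
        have hfC₃ : f ∉ C₃ := by
          intro h
          rcases hC₃sub h with h' | h'
          · exact hfe h'
          · exact h'.2 (Or.inr (Or.inl rfl))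
        have hgC₃ : g ∉ C₃ := by
          intro h
          rcases hC₃sub h with h' | h'
          · exact hge h'
          · exact h'.2 (Or.inr (Or.inr rfl))
        rcases hbad C₃ hC₃ heC₃ hC₃U with h | h
        · exact hfC₃ (h hfA)
        · exact hgC₃ (h hgB)
      · -- g ∈ (C₂ \ C₁) \ D, f ∈ D ∩ (C₁ \ C₂)
        have hfA : f ∈ C₁ \ C₂ := hfD.2
        have hfe : f ≠ e := fun h => hfA.2 (h ▸ he₂)
        have hge : g ≠ e := fun h => hgB.2 (h ▸ he₁)
        have hDf : D \ {f} ⊆ (C₁ ∪ C₂) \ {e, g, f} := by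
          intro x hx
          have hxU := hDsub hx.1
          refine ⟨hxU.1, ?_⟩
          simp only [mem_insert_iff, mem_singleton_iff]
          push_neg
          refine ⟨fun h => hxU.2 h, fun h => hgD (h ▸ hx.1), fun h => hx.2 (h ▸ rfl)⟩
        have h1 : f ∈ M.closure ((C₁ ∪ C₂) \ {e, g, f}) :=
          mem_of_mem_of_subset (hD.mem_closure_diff hfD.1) (M.closure_subset_closure hDf)
        have h2 : C₁ \ {e} ⊆ insert f ((C₁ ∪ C₂) \ {e, g, f}) := by
          intro x hx
          rcases eq_or_ne x f with rfl | hxf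
          · exact mem_insert _ _
          · refine Or.inr ⟨Or.inl hx.1, ?_⟩
            simp only [mem_insert_iff, mem_singleton_iff]
            push_neg
            exact ⟨fun h => hx.2 (h ▸ rfl), fun h => hgB.2 (h ▸ hx.1), hxf⟩
        have h3 : e ∈ M.closure (insert f ((C₁ ∪ C₂) \ {e, g, f})) :=
          mem_of_mem_of_subset (hC₁.mem_closure_diff he₁) (M.closure_subset_closure h2)
        rw [closure_insert_eq_of_mem_closure h1] at h3
        have heV : e ∉ (C₁ ∪ C₂) \ {e, g, f} := fun h => h.2 (Or.inl rfl)
        obtain ⟨C₃, hC₃, heC₃, hC₃sub⟩ := exists_circuit_of_mem_closure hM h3 heV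
        have hC₃U : C₃ ⊆ C₁ ∪ C₂ :=
          hC₃sub.trans (insert_subset (Or.inl he₁) diff_subset)
        have hfC₃ : f ∉ C₃ := by
          intro h
          rcases hC₃sub h with h' | h'
          · exact hfe h'
          · exact h'.2 (Or.inr (Or.inr rfl))
        have hgC₃ : g ∉ C₃ := by
          intro h
          rcases hC₃sub h with h' | h'
          · exact hge h'
          · exact h'.2 (Or.inr (Or.inl rfl))
        rcases hbad C₃ hC₃ heC₃ hC₃U with h | h
        · exact hfC₃ (h hfA)
        · exact hgC₃ (h hgB)
    have hcrux : ∃ C₃, Circuit M C₃ ∧ e ∈ C₃ ∧ C₃ ⊆ C₁ ∪ C₂ ∧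
        ¬ C₁ \ C₂ ⊆ C₃ ∧ ¬ C₂ \ C₁ ⊆ C₃ := by
      by_contra h
      apply hbadFalse
      intro C₃ h1 h2 h3
      by_contra h4
      push_neg at h4
      exact h ⟨C₃, h1, h2, h3, h4.1, h4.2⟩
    obtain ⟨C₃, hC₃, heC₃, hC₃U, hnA, hnB⟩ := hcrux
    obtain ⟨g, hgB, hgC₃⟩ := not_subset.1 hnB
    obtain ⟨f, hfA, hfC₃⟩ := not_subset.1 hnA
    have h13 : (C₁ ∪ C₃).ncard < n := by
      rw [← hn]
      refine ncard_lt_ncard ?_ hUfin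
      refine (ssubset_iff_of_subset (union_subset subset_union_left hC₃U)).2 ?_
      exact ⟨g, Or.inr hgB.1, fun h => h.elim hgB.2 hgC₃⟩
    have h32 : (C₃ ∪ C₂).ncard < n := by
      rw [← hn]
      refine ncard_lt_ncard ?_ hUfin
      refine (ssubset_iff_of_subset (union_subset hC₃U subset_union_right)).2 ?_
      exact ⟨f, Or.inl hfA.1, fun h => h.elim hfC₃ hfA.2⟩
    have ih₁ := IH _ h13 C₁ C₃ e rfl hC₁ hC₃ he₁ heC₃
    have ih₂ := IH _ h32 C₃ C₂ e rfl hC₃ hC₂ heC₃ he₂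
    have hC₃F : C₃ ∈ N.closure ({C | Circuit M C ∧ C ⊆ (C₁ ∪ C₂) \ {e}} ∪ {C₁}) := by
      refine mem_of_mem_of_subset ih₁ (N.closure_subset_closure ?_)
      rintro Z (hZ | rfl)
      · exact Or.inl ⟨hZ.1, hZ.2.trans (diff_subset_diff_left
          (union_subset subset_union_left hC₃U))⟩
      · exact Or.inr rfl
    have hsub2 : {C | Circuit M C ∧ C ⊆ (C₃ ∪ C₂) \ {e}} ∪ {C₃} ⊆
        N.closure ({C | Circuit M C ∧ C ⊆ (C₁ ∪ C₂) \ {e}} ∪ {C₁}) := by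
      rintro Z (hZ | rfl)
      · refine mem_of_mem_of_subset ?_ (N.subset_closure _ hEsub)
        exact Or.inl ⟨hZ.1, hZ.2.trans (diff_subset_diff_left
          (union_subset hC₃U subset_union_right))⟩
      · exact hC₃F
    refine mem_of_mem_of_subset ih₂ ?_
    calc N.closure ({C | Circuit M C ∧ C ⊆ (C₃ ∪ C₂) \ {e}} ∪ {C₃})
        ⊆ N.closure (N.closure ({C | Circuit M C ∧ C ⊆ (C₁ ∪ C₂) \ {e}} ∪ {C₁})) :=
          N.closure_subset_closure hsub2
      _ = N.closure ({C | Circuit M C ∧ C ⊆ (C₁ ∪ C₂) \ {e}} ∪ {C₁}) := N.closure_closure _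

end LemA
section CSLemmas

variable {M : Matroid α} {N : Matroid (Set α)} {X X' W W' : Set α} {e : α}

/-- The set of circuits of `M` contained in `X`. -/
def CS (M : Matroid α) (X : Set α) : Set (Set α) := {C | Circuit M C ∧ C ⊆ X}

lemma CS_mono (h : X ⊆ X') : CS M X ⊆ CS M X' := fun _ hC => ⟨hC.1, hC.2.trans h⟩

lemma CS_subset_ground (hN : LiftCondition M N) : CS M X ⊆ N.E := fun _ hC => hC.1.mem_NE hN

lemma CS_insert_of_not_mem_closure (he : e ∉ M.closure X) :
    CS M (insert e X) = CS M X := by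
  refine Subset.antisymm ?_ (CS_mono (subset_insert _ _))
  rintro C ⟨hC, hCsub⟩
  by_cases heC : e ∈ C
  · exfalso
    refine he (mem_of_mem_of_subset (hC.mem_closure_diff heC) (M.closure_subset_closure ?_))
    intro x hx
    exact ((hCsub hx.1).resolve_left hx.2)
  · exact ⟨hC, fun x hx => (hCsub hx).resolve_left fun h => heC (h ▸ hx)⟩

lemma CS_empty : CS M ∅ = (∅ : Set (Set α)) := by
  ext C
  simp only [CS, mem_setOf_eq, mem_empty_iff_false, iff_false, not_and, subset_empty_iff]
  intro hC h
  exact hC.1.nonempty.ne_empty h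

variable {Wn : Set (Set α)}

lemma rk_CS_insert_le {W : Set (Set α)} (hM : M.E.Finite) (hNfin : N.E.Finite)
    (hN : LiftCondition M N) (heX : e ∉ X) (hW : W ⊆ N.E) :
    rk N (W ∪ CS M (insert e X)) ≤ rk N (W ∪ CS M X) + 1 := by
  by_cases he : e ∈ M.closure X
  · obtain ⟨C₀, hC₀, heC₀, hC₀sub⟩ := exists_circuit_of_mem_closure hM he heX
    have hsubc : insert C₀ (W ∪ CS M X) ⊆ N.E := by
      refine insert_subset (hC₀.mem_NE hN) (union_subset hW (CS_subset_ground hN))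
    have hclaim : W ∪ CS M (insert e X) ⊆ N.closure (insert C₀ (W ∪ CS M X)) := by
      rintro Z (hZ | hZ)
      · exact mem_of_mem_of_subset (Or.inr (Or.inl hZ)) (N.subset_closure _ hsubc)
      · by_cases heZ : e ∈ Z
        · have hlem := lemA hM hN _ C₀ Z e rfl hC₀ hZ.1 heC₀ heZ
          refine mem_of_mem_of_subset hlem (N.closure_subset_closure ?_)
          rintro Y (hY | rfl)
          · refine Or.inr (Or.inr ⟨hY.1, hY.2.trans ?_⟩)
            intro x hx
            rcases hx.1 with h | h
            · exact ((hC₀sub h).resolve_left hx.2)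
            · exact ((hZ.2 h).resolve_left hx.2)
          · exact Or.inl rfl
        · refine mem_of_mem_of_subset (Or.inr (Or.inr ?_)) (N.subset_closure _ hsubc)
          exact ⟨hZ.1, fun x hx => (hZ.2 hx).resolve_left fun h => heZ (h ▸ hx)⟩
    calc rk N (W ∪ CS M (insert e X)) ≤ rk N (insert C₀ (W ∪ CS M X)) :=
          rk_le_of_subset_closure hNfin hclaim
      _ ≤ rk N (W ∪ CS M X) + 1 := rk_insert_le hNfin
  · rw [CS_insert_of_not_mem_closure he]
    exact Nat.le_succ _

lemma rk_CS_insert_eq_of_rk_eq {W W' : Set (Set α)} (hM : M.E.Finite) (hNfin : N.E.Finite)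
    (hN : LiftCondition M N) (he : e ∈ M.closure X) (heX : e ∉ X) (heX' : e ∉ X')
    (hXX' : X ⊆ X') (hWW' : W ⊆ W') (hW' : W' ⊆ N.E)
    (hrk : rk N (W ∪ CS M (insert e X)) ≤ rk N (W ∪ CS M X)) :
    rk N (W' ∪ CS M (insert e X')) ≤ rk N (W' ∪ CS M X') := by
  obtain ⟨C₀, hC₀, heC₀, hC₀sub⟩ := exists_circuit_of_mem_closure hM he heX
  have hC₀mem : C₀ ∈ W ∪ CS M (insert e X) := Or.inr ⟨hC₀, hC₀sub⟩
  have hC₀cl : C₀ ∈ N.closure (W ∪ CS M X) :=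
    mem_closure_of_rk_le hNfin (union_subset_union_right _ (CS_mono (subset_insert _ _)))
      hrk hC₀mem (hC₀.mem_NE hN)
  have hC₀cl' : C₀ ∈ N.closure (W' ∪ CS M X') := by
    refine mem_of_mem_of_subset hC₀cl (N.closure_subset_closure ?_)
    exact union_subset_union hWW' (CS_mono hXX')
  have hsubc : W' ∪ CS M X' ⊆ N.E := union_subset hW' (CS_subset_ground hN)
  have hclaim : W' ∪ CS M (insert e X') ⊆ N.closure (W' ∪ CS M X') := by
    rintro Z (hZ | hZ)
    · exact mem_of_mem_of_subset (Or.inl hZ) (N.subset_closure _ hsubc)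
    · by_cases heZ : e ∈ Z
      · have hlem := lemA hM hN _ C₀ Z e rfl hC₀ hZ.1 heC₀ heZ
        have hstep : {C | Circuit M C ∧ C ⊆ (C₀ ∪ Z) \ {e}} ∪ {C₀} ⊆
            N.closure (W' ∪ CS M X') := by
          rintro Y (hY | rfl)
          · refine mem_of_mem_of_subset (Or.inr ⟨hY.1, hY.2.trans ?_⟩) (N.subset_closure _ hsubc)
            intro x hx
            rcases hx.1 with h | h
            · exact hXX' ((hC₀sub h).resolve_left hx.2)
            · exact (hZ.2 h).resolve_left hx.2
          · exact hC₀cl'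
        refine mem_of_mem_of_subset hlem ?_
        calc N.closure ({C | Circuit M C ∧ C ⊆ (C₀ ∪ Z) \ {e}} ∪ {C₀})
            ⊆ N.closure (N.closure (W' ∪ CS M X')) := N.closure_subset_closure hstep
          _ = N.closure (W' ∪ CS M X') := N.closure_closure _
      · refine mem_of_mem_of_subset (Or.inr ?_) (N.subset_closure _ hsubc)
        exact ⟨hZ.1, fun x hx => (hZ.2 hx).resolve_left fun h => heZ (h ▸ hx)⟩
  exact rk_le_of_subset_closure hNfin hclaim

end CSLemmas
section Master

variable {M : Matroid α} {N : Matroid (Set α)} {X A B : Set α} {W WA WB : Set (Set α)} {e : α}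

/-- local unit increase for the combined function. -/
lemma master_insert_le (hM : M.E.Finite) (hNfin : N.E.Finite) (hN : LiftCondition M N)
    (hXE : X ⊆ M.E) (heE : e ∈ M.E) (hW : W ⊆ N.E) :
    rk M (insert e X) + rk N (W ∪ CS M (insert e X)) ≤ rk M X + rk N (W ∪ CS M X) + 1 := by
  by_cases heX : e ∈ X
  · rw [insert_eq_of_mem heX]; omega
  by_cases he : e ∈ M.closure X
  · rw [rk_insert_eq_of_mem_closure hM he]
    have := rk_CS_insert_le (N := N) hM hNfin hN heX hW
    omega
  · rw [rk_insert_eq_add_one hM heE he, CS_insert_of_not_mem_closure he]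
    omega

lemma master_le_insert (hM : M.E.Finite) (hNfin : N.E.Finite) :
    rk M X + rk N (W ∪ CS M X) ≤ rk M (insert e X) + rk N (W ∪ CS M (insert e X)) := by
  have h1 := rk_le_rk_insert (Q := M) (X := X) (e := e) hM
  have h2 : rk N (W ∪ CS M X) ≤ rk N (W ∪ CS M (insert e X)) :=
    rk_mono hNfin (union_subset_union_right _ (CS_mono (subset_insert _ _)))
  omega

/-- diminishing returns for the combined function (ground-element side). -/
lemma master_submod (hM : M.E.Finite) (hNfin : N.E.Finite) (hN : LiftCondition M N)
    (hBA : B ⊆ A) (hAE : A ⊆ M.E) (heE : e ∈ M.E) (hWBA : WB ⊆ WA) (hWA : WA ⊆ N.E) :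
    rk M (insert e A) + rk N (WA ∪ CS M (insert e A)) + (rk M B + rk N (WB ∪ CS M B)) ≤
    rk M A + rk N (WA ∪ CS M A) + (rk M (insert e B) + rk N (WB ∪ CS M (insert e B))) := by
  have hWB : WB ⊆ N.E := hWBA.trans hWA
  have hBE : B ⊆ M.E := hBA.trans hAE
  by_cases heA : e ∈ A
  · rw [insert_eq_of_mem heA]
    have := master_le_insert (M := M) (N := N) (X := B) (W := WB) (e := e) hM hNfin
    omega
  have heB : e ∉ B := fun h => heA (hBA h)
  by_cases hclB : e ∈ M.closure B
  · have hclA : e ∈ M.closure A := M.closure_subset_closure hBA hclB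
    rw [rk_insert_eq_of_mem_closure hM hclB, rk_insert_eq_of_mem_closure hM hclA]
    by_cases hr : rk N (WB ∪ CS M (insert e B)) ≤ rk N (WB ∪ CS M B)
    · have h1 := rk_CS_insert_eq_of_rk_eq (N := N) hM hNfin hN hclB heB heA hBA hWBA hWA hr
      have h2 : rk N (WB ∪ CS M B) ≤ rk N (WB ∪ CS M (insert e B)) :=
        rk_mono hNfin (union_subset_union_right _ (CS_mono (subset_insert _ _)))
      omega
    · push_neg at hr
      have h1 := rk_CS_insert_le (N := N) (W := WA) hM hNfin hN heA hWA
      omega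
  by_cases hclA : e ∈ M.closure A
  · rw [rk_insert_eq_of_mem_closure hM hclA, rk_insert_eq_add_one hM heE hclB,
      CS_insert_of_not_mem_closure hclB]
    have h1 := rk_CS_insert_le (N := N) (W := WA) hM hNfin hN heA hWA
    omega
  · rw [rk_insert_eq_add_one hM heE hclB, rk_insert_eq_add_one hM heE hclA,
      CS_insert_of_not_mem_closure hclB, CS_insert_of_not_mem_closure hclA]
    omega

end Master

section RankMatroid

variable {E X : Set α} {r : Set α → ℕ}

structure RankAxioms (E : Set α) (r : Set α → ℕ) : Prop where
  finite : E.Finite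
  empty : r ∅ = 0
  le_insert : ∀ X, X ⊆ E → ∀ e ∈ E, r X ≤ r (insert e X)
  insert_le : ∀ X, X ⊆ E → ∀ e ∈ E, r (insert e X) ≤ r X + 1
  submod : ∀ A B e, B ⊆ A → A ⊆ E → e ∈ E → r (insert e A) + r B ≤ r A + r (insert e B)

namespace RankAxioms

lemma mono_union (h : RankAxioms E r) (X : Set α) (hX : X ⊆ E) :
    ∀ S, S.Finite → S ⊆ E → r X ≤ r (X ∪ S) := by
  intro S hSfin
  refine Set.Finite.induction_on (motive := fun S _ => S ⊆ E → r X ≤ r (X ∪ S)) _ hSfin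
    (fun _ => by rw [union_empty]) ?_
  intro a S ha hSfin IH hsub
  · rw [union_insert]
    calc r X ≤ r (X ∪ S) := IH (fun x hx => hsub (Or.inr hx))
      _ ≤ r (insert a (X ∪ S)) :=
          h.le_insert _ (union_subset hX fun x hx => hsub (Or.inr hx)) a (hsub (Or.inl rfl))

lemma mono (h : RankAxioms E r) {X Y : Set α} (hXY : X ⊆ Y) (hY : Y ⊆ E) : r X ≤ r Y := by
  have := h.mono_union X (hXY.trans hY) (Y \ X) ((h.finite.subset hY).diff)
    (diff_subset.trans hY)
  rwa [union_diff_cancel hXY] at this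

lemma le_ncard (h : RankAxioms E r) : ∀ X, X.Finite → X ⊆ E → r X ≤ X.ncard := by
  intro X hXfin
  refine Set.Finite.induction_on (motive := fun X _ => X ⊆ E → r X ≤ X.ncard) _ hXfin
    (fun _ => by rw [h.empty, ncard_empty]) ?_
  intro a S ha hSfin IH hsub
  · have hS : S ⊆ E := fun x hx => hsub (Or.inr hx)
    calc r (insert a S) ≤ r S + 1 := h.insert_le _ hS a (hsub (Or.inl rfl))
      _ ≤ S.ncard + 1 := by have := IH hS; omega
      _ = (insert a S).ncard := (ncard_insert_of_notMem ha hSfin).symm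

lemma union_le (h : RankAxioms E r) (J : Set α) (hJ : J ⊆ E) :
    ∀ S, S.Finite → S ⊆ E → r (J ∪ S) ≤ r J + S.ncard := by
  intro S hSfin
  refine Set.Finite.induction_on (motive := fun S _ => S ⊆ E → r (J ∪ S) ≤ r J + S.ncard) _ hSfin
    (fun _ => by rw [union_empty]; omega) ?_
  intro a S ha hSfin IH hsub
  · have hS : S ⊆ E := fun x hx => hsub (Or.inr hx)
    rw [union_insert]
    calc r (insert a (J ∪ S)) ≤ r (J ∪ S) + 1 :=
          h.insert_le _ (union_subset hJ hS) a (hsub (Or.inl rfl))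
      _ ≤ r J + S.ncard + 1 := by have := IH hS; omega
      _ = r J + (insert a S).ncard := by rw [ncard_insert_of_notMem ha hSfin]; omega

lemma union_eq_of_forall (h : RankAxioms E r) {X Y : Set α} (hX : X ⊆ E) (hY : Y ⊆ E)
    (hall : ∀ e ∈ Y, r (insert e X) = r X) : r (X ∪ Y) = r X := by
  have hYfin : Y.Finite := h.finite.subset hY
  have key : ∀ S, S.Finite → S ⊆ Y → r (X ∪ S) = r X := by
    intro S hSfin
    refine Set.Finite.induction_on (motive := fun S _ => S ⊆ Y → r (X ∪ S) = r X) _ hSfin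
      (fun _ => by rw [union_empty]) ?_
    intro a S ha hSfin IH hsub
    · have hSY : S ⊆ Y := fun x hx => hsub (Or.inr hx)
      have haY : a ∈ Y := hsub (Or.inl rfl)
      have hXS : X ∪ S ⊆ E := union_subset hX (hSY.trans hY)
      have hsm := h.submod (X ∪ S) X a subset_union_left hXS (hY haY)
      have h1 : r (insert a X) = r X := hall a haY
      have h2 : r (X ∪ S) = r X := IH hSY
      have h3 : r (X ∪ S) ≤ r (insert a (X ∪ S)) := h.le_insert _ hXS a (hY haY)
      rw [union_insert]
      omega
  exact key Y hYfin subset_rfl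

/-- The matroid defined by a rank function satisfying the axioms. -/
noncomputable def matroid (h : RankAxioms E r) : Matroid α :=
  (IndepMatroid.ofFinite h.finite (fun I => I ⊆ E ∧ r I = I.ncard)
    (⟨empty_subset _, by rw [h.empty, ncard_empty]⟩)
    (by
      rintro I J ⟨hJE, hrJ⟩ hIJ
      have hIE : I ⊆ E := hIJ.trans hJE
      have hJfin : J.Finite := h.finite.subset hJE
      have hIfin : I.Finite := hJfin.subset hIJ
      refine ⟨hIE, le_antisymm (h.le_ncard I hIfin hIE) ?_⟩
      have h1 : r J ≤ r I + (J \ I).ncard := by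
        have := h.union_le I hIE (J \ I) (hJfin.diff) (diff_subset.trans hJE)
        rwa [union_diff_cancel hIJ] at this
      have h2 : (J \ I).ncard + I.ncard = J.ncard :=
        ncard_diff_add_ncard_of_subset hIJ hJfin
      omega)
    (by
      rintro I J ⟨hIE, hrI⟩ ⟨hJE, hrJ⟩ hcard
      by_contra hcon
      push_neg at hcon
      have hall : ∀ e ∈ J, r (insert e I) = r I := by
        intro e heJ
        by_cases heI : e ∈ I
        · rw [insert_eq_of_mem heI]
        · have hne := hcon e heJ heI
          have hins : insert e I ⊆ E := insert_subset (hJE heJ) hIE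
          have h1 : r (insert e I) ≠ (insert e I).ncard := fun hh => hne hins hh
          have h2 : r (insert e I) ≤ (insert e I).ncard :=
            h.le_ncard _ (h.finite.subset hins) hins
          have h3 : (insert e I).ncard = I.ncard + 1 :=
            ncard_insert_of_notMem heI (h.finite.subset hIE)
          have h4 : r I ≤ r (insert e I) := h.le_insert _ hIE e (hJE heJ)
          have h5 : r (insert e I) ≤ r I + 1 := h.insert_le _ hIE e (hJE heJ)
          omega
      have h6 : r (I ∪ J) = r I := h.union_eq_of_forall hIE hJE hall
      have h7 : r J ≤ r (I ∪ J) := h.mono subset_union_right (union_subset hIE hJE)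
      omega)
    (fun I hI => hI.1)).matroid

@[simp] lemma matroid_ground (h : RankAxioms E r) : h.matroid.E = E := rfl

lemma matroid_indep_iff (h : RankAxioms E r) {I : Set α} :
    h.matroid.Indep I ↔ I ⊆ E ∧ r I = I.ncard := by
  simp [RankAxioms.matroid]

lemma rk_matroid (h : RankAxioms E r) (hX : X ⊆ E) : rk h.matroid X = r X := by
  have hfin : h.matroid.E.Finite := h.finite
  obtain ⟨I, hI⟩ := h.matroid.exists_isBasis' X
  obtain ⟨hIE, hrI⟩ := h.matroid_indep_iff.1 hI.indep
  have hIX : I ⊆ X := hI.subset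
  have hall : ∀ e ∈ X, r (insert e I) = r I := by
    intro e heX
    by_cases heI : e ∈ I
    · rw [insert_eq_of_mem heI]
    · have hni : ¬ h.matroid.Indep (insert e I) := hI.insert_not_indep ⟨heX, heI⟩
      rw [h.matroid_indep_iff] at hni
      have hins : insert e I ⊆ E := insert_subset (hX heX) hIE
      have h1 : r (insert e I) ≠ (insert e I).ncard := fun hh => hni ⟨hins, hh⟩
      have h2 : r (insert e I) ≤ (insert e I).ncard :=
        h.le_ncard _ (h.finite.subset hins) hins
      have h3 : (insert e I).ncard = I.ncard + 1 :=
        ncard_insert_of_notMem heI (h.finite.subset hIE)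
      have h4 : r I ≤ r (insert e I) := h.le_insert _ hIE e (hX heX)
      have h5 : r (insert e I) ≤ r I + 1 := h.insert_le _ hIE e (hX heX)
      omega
  have h6 : r (I ∪ X) = r I := h.union_eq_of_forall hIE hX hall
  rw [union_eq_self_of_subset_left hIX] at h6
  rw [rk_eq_ncard_basis' hfin hI, h6, hrI]

end RankAxioms

end RankMatroid
section Assembly

variable {M : Matroid α} {N : Matroid (Set α)}

lemma NE_finite (hM : M.E.Finite) (hN : LiftCondition M N) : N.E.Finite := by
  rw [hN.1]
  exact hM.finite_subsets.subset fun C hC => hC.subset_ground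

/-- rank function of the lift matroid `L`. -/
noncomputable def liftFn (M : Matroid α) (N : Matroid (Set α)) : Set α → ℕ :=
  fun X => rk M X + rk N (CS M X)

/-- rank function of the big matroid `K`. -/
noncomputable def KFn (M : Matroid α) (N : Matroid (Set α)) : Set (α ⊕ Set α) → ℕ :=
  fun X => rk M (Sum.inl ⁻¹' X) + rk N ((Sum.inr ⁻¹' X) ∪ CS M (Sum.inl ⁻¹' X))

lemma liftAxioms (hM : M.E.Finite) (hN : LiftCondition M N) :
    RankAxioms M.E (liftFn M N) := by
  have hNfin := NE_finite hM hN
  constructor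
  · exact hM
  · show rk M ∅ + rk N (CS M ∅) = 0
    rw [CS_empty, rk_empty hM, rk_empty hNfin]
  · intro X hX e he
    have := master_le_insert (M := M) (N := N) (X := X) (W := ∅) (e := e) hM hNfin
    simpa [liftFn] using this
  · intro X hX e he
    have := master_insert_le (W := ∅) hM hNfin hN hX he (empty_subset _)
    simpa [liftFn] using this
  · intro A B e hBA hAE heE
    have := master_submod (WA := ∅) (WB := ∅) hM hNfin hN hBA hAE heE subset_rfl
      (empty_subset _)
    simpa [liftFn] using this

lemma preimage_inl_insert_inl (a : α) (X : Set (α ⊕ β)) :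
    Sum.inl ⁻¹' (insert (Sum.inl a) X) = insert a (Sum.inl ⁻¹' X) := by ext x; simp

lemma preimage_inr_insert_inl (a : α) (X : Set (α ⊕ β)) :
    Sum.inr ⁻¹' (insert (Sum.inl a) X) = Sum.inr ⁻¹' X := by ext x; simp

lemma preimage_inl_insert_inr (b : β) (X : Set (α ⊕ β)) :
    Sum.inl ⁻¹' (insert (Sum.inr b) X) = Sum.inl ⁻¹' X := by ext x; simp

lemma preimage_inr_insert_inr (b : β) (X : Set (α ⊕ β)) :
    Sum.inr ⁻¹' (insert (Sum.inr b) X) = insert b (Sum.inr ⁻¹' X) := by ext x; simp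

lemma preimage_inl_subset {X : Set (α ⊕ Set α)}
    (hX : X ⊆ (Sum.inl '' M.E) ∪ (Sum.inr '' N.E)) : Sum.inl ⁻¹' X ⊆ M.E := by
  intro x hx
  rcases hX hx with ⟨a, ha, hEq⟩ | ⟨S, hS, hEq⟩
  · rwa [← Sum.inl_injective hEq]
  · exact absurd hEq (by simp)

lemma preimage_inr_subset {X : Set (α ⊕ Set α)}
    (hX : X ⊆ (Sum.inl '' M.E) ∪ (Sum.inr '' N.E)) : Sum.inr ⁻¹' X ⊆ N.E := by
  intro S hS
  rcases hX hS with ⟨a, ha, hEq⟩ | ⟨T, hT, hEq⟩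
  · exact absurd hEq (by simp)
  · rwa [← Sum.inr_injective hEq]

lemma KAxioms (hM : M.E.Finite) (hN : LiftCondition M N) :
    RankAxioms ((Sum.inl '' M.E) ∪ (Sum.inr '' N.E)) (KFn M N) := by
  have hNfin := NE_finite hM hN
  constructor
  · exact (hM.image _).union (hNfin.image _)
  · show rk M (Sum.inl ⁻¹' ∅) + rk N ((Sum.inr ⁻¹' ∅) ∪ CS M (Sum.inl ⁻¹' ∅)) = 0
    simp only [preimage_empty, CS_empty, union_empty, rk_empty hM, rk_empty hNfin]
  · rintro X hX e (⟨a, haE, rfl⟩ | ⟨S, hSE, rfl⟩)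
    · show rk M _ + rk N _ ≤ rk M _ + rk N _
      rw [preimage_inl_insert_inl, preimage_inr_insert_inl]
      exact master_le_insert hM hNfin
    · show rk M _ + rk N _ ≤ rk M _ + rk N _
      rw [preimage_inl_insert_inr, preimage_inr_insert_inr, insert_union]
      have := rk_le_rk_insert (Q := N) (X := (Sum.inr ⁻¹' X) ∪ CS M (Sum.inl ⁻¹' X))
        (e := S) hNfin
      omega
  · rintro X hX e (⟨a, haE, rfl⟩ | ⟨S, hSE, rfl⟩)
    · show rk M _ + rk N _ ≤ rk M _ + rk N _ + 1
      rw [preimage_inl_insert_inl, preimage_inr_insert_inl]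
      exact master_insert_le hM hNfin hN (preimage_inl_subset hX) haE
        (preimage_inr_subset hX)
    · show rk M _ + rk N _ ≤ rk M _ + rk N _ + 1
      rw [preimage_inl_insert_inr, preimage_inr_insert_inr, insert_union]
      have := rk_insert_le (Q := N) (X := (Sum.inr ⁻¹' X) ∪ CS M (Sum.inl ⁻¹' X))
        (e := S) hNfin
      omega
  · rintro A B e hBA hAE (⟨a, haE, rfl⟩ | ⟨S, hSE, rfl⟩)
    · show rk M _ + rk N _ + (rk M _ + rk N _) ≤ rk M _ + rk N _ + (rk M _ + rk N _)
      rw [preimage_inl_insert_inl, preimage_inr_insert_inl,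
        preimage_inl_insert_inl, preimage_inr_insert_inl]
      exact master_submod hM hNfin hN (preimage_mono hBA) (preimage_inl_subset hAE) haE
        (preimage_mono hBA) (preimage_inr_subset hAE)
    · show rk M _ + rk N _ + (rk M _ + rk N _) ≤ rk M _ + rk N _ + (rk M _ + rk N _)
      rw [preimage_inl_insert_inr, preimage_inr_insert_inr,
        preimage_inl_insert_inr, preimage_inr_insert_inr, insert_union, insert_union]
      have hsub : (Sum.inr ⁻¹' B) ∪ CS M (Sum.inl ⁻¹' B) ⊆
          (Sum.inr ⁻¹' A) ∪ CS M (Sum.inl ⁻¹' A) :=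
        union_subset_union (preimage_mono hBA) (CS_mono (preimage_mono hBA))
      have := rk_insert_submod (Q := N) (e := S) hNfin hsub
      omega

end Assembly
section Final

variable {M : Matroid α} {N : Matroid (Set α)}

lemma inl_inr_disjoint : Disjoint (Sum.inl '' M.E) (Sum.inr '' N.E) := by
  rw [disjoint_left]
  rintro x ⟨a, ha, rfl⟩ ⟨S, hS, hEq⟩
  exact absurd hEq (by simp)

lemma ground_diff_F (hM : M.E.Finite) (hN : LiftCondition M N) :
    (KAxioms hM hN).matroid.E \ (Sum.inr '' N.E) = Sum.inl '' M.E := by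
  have : (KAxioms hM hN).matroid.E = (Sum.inl '' M.E) ∪ (Sum.inr '' N.E) := rfl
  rw [this, union_diff_right, (inl_inr_disjoint (M := M) (N := N)).sdiff_eq_left]

lemma rkK_union_F (hM : M.E.Finite) (hN : LiftCondition M N) {B' : Set (α ⊕ Set α)}
    (hB' : B' ⊆ Sum.inl '' M.E) :
    rk (KAxioms hM hN).matroid (B' ∪ Sum.inr '' N.E) = rk M (Sum.inl ⁻¹' B') + rank N := by
  rw [(KAxioms hM hN).rk_matroid
    (union_subset (hB'.trans subset_union_left) subset_union_right)]
  show rk M _ + rk N _ = _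
  have h1 : Sum.inl ⁻¹' (B' ∪ Sum.inr '' N.E) = Sum.inl ⁻¹' B' := by
    rw [preimage_union]
    have h : Sum.inl ⁻¹' (Sum.inr '' N.E : Set (α ⊕ Set α)) = ∅ := by ext x; simp
    rw [h, union_empty]
  have h2 : Sum.inr ⁻¹' (B' ∪ Sum.inr '' N.E) = N.E := by
    rw [preimage_union, preimage_image_eq _ Sum.inr_injective]
    have h : Sum.inr ⁻¹' B' = (∅ : Set (Set α)) := by
      ext S
      simp only [mem_preimage, mem_empty_iff_false, iff_false]
      intro hS
      obtain ⟨a, _, hEq⟩ := hB' hS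
      exact absurd hEq (by simp)
    rw [h, empty_union]
  rw [h1, h2, union_eq_self_of_subset_right (CS_subset_ground hN)]
  rfl

lemma rankK_eq (hM : M.E.Finite) (hN : LiftCondition M N) :
    rank (KAxioms hM hN).matroid = rank M + rank N := by
  show rk _ _ = _
  have hKE : (KAxioms hM hN).matroid.E = (Sum.inl '' M.E) ∪ (Sum.inr '' N.E) := rfl
  rw [hKE, (KAxioms hM hN).rk_matroid subset_rfl]
  show rk M _ + rk N _ = _
  have h1 : Sum.inl ⁻¹' ((Sum.inl '' M.E) ∪ (Sum.inr '' N.E) : Set (α ⊕ Set α)) = M.E := by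
    ext x; simp
  have h2 : Sum.inr ⁻¹' ((Sum.inl '' M.E) ∪ (Sum.inr '' N.E) : Set (α ⊕ Set α)) = N.E := by
    ext S; simp
  rw [h1, h2, union_eq_self_of_subset_right (CS_subset_ground hN)]
  rfl

lemma dual_indep_iff_rkM (hM : M.E.Finite) (hN : LiftCondition M N) {B' : Set (α ⊕ Set α)}
    (hB' : B' ⊆ Sum.inl '' M.E) :
    (KAxioms hM hN).matroid✶.Indep ((Sum.inl '' M.E) \ B') ↔
      rk M (Sum.inl ⁻¹' B') = rank M := by
  have hEKfin : (KAxioms hM hN).matroid.E.Finite := (KAxioms hM hN).finite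
  have hKE : (KAxioms hM hN).matroid.E = (Sum.inl '' M.E) ∪ (Sum.inr '' N.E) := rfl
  have hBF : B' ∪ Sum.inr '' N.E ⊆ (KAxioms hM hN).matroid.E :=
    (union_subset (hB'.trans subset_union_left) subset_union_right).trans hKE.symm.subset
  rw [dual_indep_iff_exists']
  constructor
  · rintro ⟨hsub, B₀, hB₀, hdisj⟩
    have hB₀sub : B₀ ⊆ B' ∪ Sum.inr '' N.E := by
      intro x hx
      rcases (hB₀.subset_ground.trans hKE.subset) hx with hxG | hxF
      · left
        by_contra hxB'
        exact disjoint_left.1 hdisj ⟨hxG, hxB'⟩ hx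
      · exact Or.inr hxF
    have hrk := (exists_base_subset_iff_rk hEKfin hBF).1 ⟨B₀, hB₀, hB₀sub⟩
    rw [rkK_union_F hM hN hB', rankK_eq hM hN] at hrk
    omega
  · intro hr
    have hrk : rk (KAxioms hM hN).matroid (B' ∪ Sum.inr '' N.E) =
        rank (KAxioms hM hN).matroid := by
      rw [rkK_union_F hM hN hB', rankK_eq hM hN, hr]
    obtain ⟨B₀, hB₀, hB₀sub⟩ := (exists_base_subset_iff_rk hEKfin hBF).2 hrk
    refine ⟨(diff_subset.trans (subset_union_left.trans hKE.symm.subset)), B₀, hB₀, ?_⟩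
    rw [disjoint_left]
    rintro x ⟨hxG, hxB'⟩ hxB₀
    rcases hB₀sub hxB₀ with h | h
    · exact hxB' h
    · exact disjoint_left.1 (inl_inr_disjoint (M := M) (N := N)) hxG h

lemma delete_eq (hM : M.E.Finite) (hN : LiftCondition M N) :
    delete (KAxioms hM hN).matroid (Sum.inr '' N.E) =
      (liftAxioms hM hN).matroid.map Sum.inl Sum.inl_injective.injOn := by
  refine ext_indep ?_ ?_
  · show ((KAxioms hM hN).matroid ↾ _).E = _
    rw [restrict_ground_eq, ground_diff_F hM hN, map_ground]
    rfl
  · intro I hI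
    have hIG : I ⊆ Sum.inl '' M.E := by
      have h : I ⊆ (KAxioms hM hN).matroid.E \ (Sum.inr '' N.E) := hI
      rwa [ground_diff_F hM hN] at h
    have hIrange : I ⊆ range Sum.inl := hIG.trans (image_subset_range _ _)
    have hIimg : Sum.inl '' (Sum.inl ⁻¹' I) = I := image_preimage_eq_of_subset hIrange
    have hI0sub : Sum.inl ⁻¹' I ⊆ M.E := by
      intro x hx
      obtain ⟨a, ha, hEq⟩ := hIG hx
      rwa [← Sum.inl_injective hEq]
    have hprI : Sum.inr ⁻¹' I = (∅ : Set (Set α)) := by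
      ext S
      simp only [mem_preimage, mem_empty_iff_false, iff_false]
      intro hS
      obtain ⟨a, _, hEq⟩ := hIG hS
      exact absurd hEq (by simp)
    have hcard := ncard_image_of_injective (Sum.inl ⁻¹' I)
      (Sum.inl_injective (α := α) (β := Set α))
    rw [hIimg] at hcard
    show ((KAxioms hM hN).matroid ↾ _).Indep I ↔ _
    rw [restrict_indep_iff, map_indep_iff]
    constructor
    · rintro ⟨hKI, -⟩
      obtain ⟨hIEK, hrK⟩ := (KAxioms hM hN).matroid_indep_iff.1 hKI
      refine ⟨Sum.inl ⁻¹' I, ?_, hIimg.symm⟩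
      rw [(liftAxioms hM hN).matroid_indep_iff]
      refine ⟨hI0sub, ?_⟩
      have hrK' : rk M (Sum.inl ⁻¹' I) + rk N ((Sum.inr ⁻¹' I) ∪ CS M (Sum.inl ⁻¹' I)) =
          I.ncard := hrK
      rw [hprI, empty_union] at hrK'
      show rk M _ + rk N (CS M _) = _
      omega
    · rintro ⟨I₀, hI₀, hIeq⟩
      have hI₀' : I₀ = Sum.inl ⁻¹' I := by
        rw [hIeq, preimage_image_eq _ Sum.inl_injective]
      subst hI₀'
      obtain ⟨hsub0, hr0⟩ := (liftAxioms hM hN).matroid_indep_iff.1 hI₀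
      refine ⟨?_, hI⟩
      rw [(KAxioms hM hN).matroid_indep_iff]
      refine ⟨hIG.trans subset_union_left, ?_⟩
      show rk M (Sum.inl ⁻¹' I) + rk N ((Sum.inr ⁻¹' I) ∪ CS M (Sum.inl ⁻¹' I)) = I.ncard
      rw [hprI, empty_union]
      have hr0' : rk M (Sum.inl ⁻¹' I) + rk N (CS M (Sum.inl ⁻¹' I)) =
          (Sum.inl ⁻¹' I).ncard := hr0
      omega

lemma contract_eq (hM : M.E.Finite) (hN : LiftCondition M N) :
    contract (KAxioms hM hN).matroid (Sum.inr '' N.E) =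
      M.map Sum.inl Sum.inl_injective.injOn := by
  set K := (KAxioms hM hN).matroid with hKdef
  have hG : K.E \ (Sum.inr '' N.E) = Sum.inl '' M.E := ground_diff_F hM hN
  have hRE : (K✶ ↾ (K.E \ (Sum.inr '' N.E))).E = Sum.inl '' M.E := by
    rw [restrict_ground_eq, hG]
  refine ext_isBase ?_ ?_
  · show ((K✶ ↾ (K.E \ _))✶).E = _
    rw [dual_ground, hRE, map_ground]
  · intro B hB
    have hBG : B ⊆ Sum.inl '' M.E := by
      have h : B ⊆ ((K✶ ↾ (K.E \ (Sum.inr '' N.E)))✶).E := hB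
      rwa [dual_ground, hRE] at h
    have hBrange : B ⊆ range Sum.inl := hBG.trans (image_subset_range _ _)
    have hBimg : Sum.inl '' (Sum.inl ⁻¹' B) = B := image_preimage_eq_of_subset hBrange
    have hB₁sub : Sum.inl ⁻¹' B ⊆ M.E := by
      intro x hx
      obtain ⟨a, ha, hEq⟩ := hBG hx
      rwa [← Sum.inl_injective hEq]
    show ((K✶ ↾ (K.E \ (Sum.inr '' N.E)))✶).IsBase B ↔ _
    rw [dual_isBase_iff (by rwa [hRE]), map_isBase_iff]
    rw [hRE]
    rw [isBase_restrict_iff', hG]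
    constructor
    · intro hBasis'
      have hindep := hBasis'.1.1
      have hrkB : rk M (Sum.inl ⁻¹' B) = rank M := (dual_indep_iff_rkM hM hN hBG).1 hindep
      obtain ⟨B₂, hB₂, hB₂sub⟩ := (exists_base_subset_iff_rk hM hB₁sub).2 hrkB
      have hB₁B₂ : Sum.inl ⁻¹' B ⊆ B₂ := by
        by_contra hcon
        obtain ⟨x, hxB₁, hxB₂⟩ := not_subset.1 hcon
        have hxB : Sum.inl x ∈ B := hxB₁
        have hD'G : insert (Sum.inl x) ((Sum.inl '' M.E) \ B) ⊆ Sum.inl '' M.E :=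
          insert_subset (hBG hxB) diff_subset
        have hset : insert (Sum.inl x) ((Sum.inl '' M.E) \ B) =
            (Sum.inl '' M.E) \ (B \ {Sum.inl x}) := by
          ext y
          simp only [mem_insert_iff, mem_diff, mem_singleton_iff]
          constructor
          · rintro (rfl | ⟨hyG, hyB⟩)
            · exact ⟨hBG hxB, fun h => h.2 rfl⟩
            · exact ⟨hyG, fun h => hyB h.1⟩
          · rintro ⟨hyG, hy⟩
            by_cases hyx : y = Sum.inl x
            · exact Or.inl hyx
            · refine Or.inr ⟨hyG, fun hyB => hy ⟨hyB, hyx⟩⟩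
        have hpre : Sum.inl ⁻¹' (B \ {Sum.inl x}) = (Sum.inl ⁻¹' B) \ {x} := by
          ext y
          simp only [mem_preimage, mem_diff, mem_singleton_iff, Sum.inl.injEq]
        have hD'indep : K✶.Indep (insert (Sum.inl x) ((Sum.inl '' M.E) \ B)) := by
          rw [hset]
          refine (dual_indep_iff_rkM hM hN (diff_subset.trans hBG)).2 ?_
          rw [hpre]
          refine (exists_base_subset_iff_rk hM (diff_subset.trans hB₁sub)).1 ?_
          exact ⟨B₂, hB₂, subset_diff_singleton hB₂sub hxB₂⟩
        have hmax := hBasis'.2 ⟨hD'indep, hD'G⟩ (subset_insert _ _)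
        exact (hmax (mem_insert _ _)).2 hxB
      have hB₁eq : Sum.inl ⁻¹' B = B₂ := Subset.antisymm hB₁B₂ hB₂sub
      exact ⟨Sum.inl ⁻¹' B, hB₁eq ▸ hB₂, hBimg.symm⟩
    · rintro ⟨B₀, hB₀, rfl⟩
      have hB₀G : Sum.inl '' B₀ ⊆ Sum.inl '' M.E :=
        image_mono (f := Sum.inl (β := Set α)) hB₀.subset_ground
      refine ⟨⟨?_, diff_subset⟩, ?_⟩
      · refine (dual_indep_iff_rkM hM hN hB₀G).2 ?_
        rw [preimage_image_eq _ Sum.inl_injective]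
        exact (exists_base_subset_iff_rk hM hB₀.subset_ground).1 ⟨B₀, hB₀, subset_rfl⟩
      · rintro D' ⟨hD'indep, hD'G⟩ hDD'
        have hD'eq : (Sum.inl '' M.E) \ ((Sum.inl '' M.E) \ D') = D' :=
          diff_diff_cancel_left hD'G
        have hindep2 : K✶.Indep ((Sum.inl '' M.E) \ ((Sum.inl '' M.E) \ D')) := by
          rwa [hD'eq]
        have hcomplsub : (Sum.inl '' M.E) \ D' ⊆ Sum.inl '' M.E := diff_subset
        have hpresub' : Sum.inl ⁻¹' ((Sum.inl '' M.E) \ D') ⊆ M.E := by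
          intro x hx
          obtain ⟨a, ha, hEq⟩ := hcomplsub hx
          rwa [← Sum.inl_injective hEq]
        have hr2 : rk M (Sum.inl ⁻¹' ((Sum.inl '' M.E) \ D')) = rank M :=
          (dual_indep_iff_rkM hM hN hcomplsub).1 hindep2
        obtain ⟨B₃, hB₃, hB₃sub⟩ := (exists_base_subset_iff_rk hM hpresub').2 hr2
        have hGD'B : (Sum.inl '' M.E) \ D' ⊆ Sum.inl '' B₀ := by
          intro y hy
          by_contra hyB
          exact hy.2 (hDD' ⟨hy.1, hyB⟩)
        have hpresub : Sum.inl ⁻¹' ((Sum.inl '' M.E) \ D') ⊆ B₀ := by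
          intro x hx
          obtain ⟨a, ha, hEq⟩ := hGD'B hx
          rwa [← Sum.inl_injective hEq]
        have hB₃eq : B₃ = B₀ := hB₃.eq_of_subset_isBase hB₀ (hB₃sub.trans hpresub)
        have himg : Sum.inl '' B₀ ⊆ (Sum.inl '' M.E) \ D' := by
          rw [← hB₃eq]
          exact (image_mono (f := Sum.inl (β := Set α)) hB₃sub).trans (image_preimage_subset _ _)
        intro y hyD'
        refine ⟨hD'G hyD', fun hyB => (himg hyB).2 hyD'⟩

end Final

/-- Theorem 2 (new lift construction): if `N`, a matroid on the circuits of `M`, satisfies the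
lift condition, then `X ↦ r_M(X) + r_N({circuits of M contained in X})` is the rank function of
a matroid `L` on `E`, and `L` is a rank-`r(N)` lift of `M`. -/
theorem stmt0 {α : Type} (M : Matroid α) (hM : M.E.Finite)
    (N : Matroid (Set α)) (hN : LiftCondition M N) :
    ∃ L : Matroid α, L.E = M.E ∧
      (∀ X ⊆ M.E, rk L X = rk M X + rk N {C | Circuit M C ∧ C ⊆ X}) ∧
      IsLiftOf L M ∧ rank L = rank M + rank N := by
  refine ⟨(liftAxioms hM hN).matroid, rfl, ?_, ?_, ?_⟩
  · intro X hX
    exact (liftAxioms hM hN).rk_matroid hX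
  · exact ⟨rfl, Set α, (KAxioms hM hN).matroid, Sum.inr '' N.E, inl_inr_disjoint, rfl,
      contract_eq hM hN, delete_eq hM hN⟩
  · show rk _ _ = _
    have hLE : (liftAxioms hM hN).matroid.E = M.E := rfl
    rw [hLE, (liftAxioms hM hN).rk_matroid subset_rfl]
    show rk M M.E + rk N (CS M M.E) = _
    have hCS : CS M M.E = N.E := by
      rw [hN.1]
      ext C
      exact ⟨fun h => h.1, fun h => ⟨h, h.subset_ground⟩⟩
    rw [hCS]
    rfl

end PaperLift
end

section
/- Let F be a field, let K be an F-representable matroid, and let X be a subset of the ground set of K. Then there exists an F-representable matroid N whose ground set is the set of circuits of K/X, such that N satisfies the lift condition for K/X and (K/X)^N = K∖X. -/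
open Set Matroid
open scoped Matroid

namespace PaperLift

variable {α : Type} {β : Type}

section RankLemmas

variable {M : Matroid α} {I J Z S : Set α}

lemma rk_isGreatest (hE : M.E.Finite) (hI : M.IsBasis' I Z) :
    IsGreatest {n | ∃ J, M.Indep J ∧ J ⊆ Z ∧ J.ncard = n} I.ncard := by
  constructor
  · exact ⟨I, hI.indep, hI.subset, rfl⟩
  rintro n ⟨J, hJ, hJZ, rfl⟩
  obtain ⟨J', hJ', hJJ'⟩ := hJ.subset_isBasis'_of_subset hJZ
  have hcard := hJ'.encard_eq_encard hI
  have hJ'fin : J'.Finite := hE.subset hJ'.indep.subset_ground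
  calc J.ncard ≤ J'.ncard := Set.ncard_le_ncard hJJ' hJ'fin
  _ = I.ncard := by rw [Set.ncard_def, hcard, ← Set.ncard_def]

lemma rk_eq_ncard_of_basis' (hE : M.E.Finite) (hI : M.IsBasis' I Z) : rk M Z = I.ncard :=
  (rk_isGreatest hE hI).csSup_eq

lemma ncard_le_rk (hE : M.E.Finite) (hJ : M.Indep J) (hJZ : J ⊆ Z) : J.ncard ≤ rk M Z := by
  obtain ⟨I, hI⟩ := M.exists_isBasis' Z
  rw [rk_eq_ncard_of_basis' hE hI]
  exact (rk_isGreatest hE hI).2 ⟨J, hJ, hJZ, rfl⟩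

lemma exists_basis'_rk (hE : M.E.Finite) (Z : Set α) :
    ∃ I, M.IsBasis' I Z ∧ I.ncard = rk M Z := by
  obtain ⟨I, hI⟩ := M.exists_isBasis' Z
  exact ⟨I, hI, (rk_eq_ncard_of_basis' hE hI).symm⟩

lemma indep_iff_rk (hE : M.E.Finite) :
    M.Indep I ↔ I ⊆ M.E ∧ rk M I = I.ncard := by
  constructor
  · exact fun h => ⟨h.subset_ground, rk_eq_ncard_of_basis' hE h.isBasis_self.isBasis'⟩
  rintro ⟨hIE, hrk⟩
  obtain ⟨J, hJ, hJcard⟩ := exists_basis'_rk hE I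
  have hJI : J = I := Set.eq_of_subset_of_ncard_le hJ.subset (by omega) (hE.subset hIE)
  rw [← hJI]; exact hJ.indep

lemma rank_eq_ncard_of_base (hE : M.E.Finite) {B : Set α} (hB : M.IsBase B) :
    rank M = B.ncard := by
  exact rk_eq_ncard_of_basis' hE hB.isBasis_ground.isBasis'

lemma rk_restrict (M : Matroid α) (R Z : Set α) : rk (M ↾ R) Z = rk M (Z ∩ R) := by
  unfold rk
  congr 1
  ext n
  constructor
  · rintro ⟨I, hI, hIZ, rfl⟩
    rw [restrict_indep_iff] at hI
    exact ⟨I, hI.1, subset_inter hIZ hI.2, rfl⟩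
  rintro ⟨I, hI, hIZ, rfl⟩
  exact ⟨I, restrict_indep_iff.2 ⟨hI, hIZ.trans inter_subset_right⟩,
    hIZ.trans inter_subset_left, rfl⟩

end RankLemmas

section DualRank

variable {M : Matroid α} {S X Y : Set α}

lemma rk_dual (hE : M.E.Finite) (hS : S ⊆ M.E) :
    rk M✶ S + rank M = S.ncard + rk M (M.E \ S) := by
  have hE' : (M✶).E.Finite := by simpa using hE
  have hSfin : S.Finite := hE.subset hS
  apply le_antisymm
  · obtain ⟨I, hI, hIcard⟩ := exists_basis'_rk hE' S
    have hIind : M✶.Indep I := hI.indep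
    rw [dual_indep_iff_exists'] at hIind
    obtain ⟨hIE, B, hB, hdisj⟩ := hIind
    rw [← hIcard, rank_eq_ncard_of_base hE hB]
    have hBfin : B.Finite := hE.subset hB.subset_ground
    have h1 : (B ∩ S).ncard + (B \ S).ncard = B.ncard :=
      Set.ncard_inter_add_ncard_diff_eq_ncard B S hBfin
    have h2 : I.ncard + (B ∩ S).ncard ≤ S.ncard := by
      rw [← Set.ncard_union_eq (hdisj.mono_right inter_subset_left) (hE.subset hIE)
        (hBfin.subset inter_subset_left)]
      exact Set.ncard_le_ncard (union_subset hI.subset inter_subset_right) hSfin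
    have h3 : (B \ S).ncard ≤ rk M (M.E \ S) :=
      ncard_le_rk hE (hB.indep.subset diff_subset) (diff_subset_diff_left hB.subset_ground)
    omega
  · obtain ⟨I₀, hI₀, hI₀card⟩ := exists_basis'_rk hE (M.E \ S)
    obtain ⟨B, hB, hI₀B⟩ := hI₀.indep.exists_isBase_superset
    have hBfin : B.Finite := hE.subset hB.subset_ground
    have hdualind : M✶.Indep (S \ B) := by
      rw [dual_indep_iff_exists']
      exact ⟨diff_subset.trans hS, B, hB, disjoint_sdiff_left⟩
    have h4 : (S \ B).ncard ≤ rk M✶ S := ncard_le_rk hE' hdualind diff_subset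
    rw [rank_eq_ncard_of_base hE hB, ← hI₀card]
    have h5 : (B ∩ S).ncard + (B \ S).ncard = B.ncard :=
      Set.ncard_inter_add_ncard_diff_eq_ncard B S hBfin
    have h6 : (S ∩ B).ncard + (S \ B).ncard = S.ncard :=
      Set.ncard_inter_add_ncard_diff_eq_ncard S B hSfin
    have h7 : I₀.ncard ≤ (B \ S).ncard := by
      refine Set.ncard_le_ncard (subset_diff.2 ⟨hI₀B, ?_⟩) hBfin.diff
      exact (subset_diff.1 hI₀.subset).2
    have h8 : (B ∩ S).ncard = (S ∩ B).ncard := by rw [inter_comm]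
    omega

lemma contract_ground_eq (M : Matroid α) (X : Set α) : (contract M X).E = M.E \ X := rfl

lemma rk_contract (hE : M.E.Finite) (hX : X ⊆ M.E) (hY : Y ⊆ M.E \ X) :
    rk (contract M X) Y + rk M X = rk M (Y ∪ X) := by
  set R := M.E \ X with hR
  have hRE : R ⊆ M.E := diff_subset
  have hRfin : R.Finite := hE.subset hRE
  set N₁ : Matroid α := M✶ ↾ R with hN₁
  have hN₁E : N₁.E = R := rfl
  have hN₁fin : N₁.E.Finite := hRfin
  -- (1)
  have h1 : rk (N₁✶) Y + rank N₁ = Y.ncard + rk N₁ (R \ Y) := by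
    have := rk_dual (M := N₁) hN₁fin (show Y ⊆ N₁.E from hY)
    rw [show N₁.E \ Y = R \ Y from rfl] at this
    exact this
  -- (2)
  have h2 : rank N₁ = rk M✶ R := by
    rw [rank, hN₁E, hN₁, rk_restrict, inter_self]
  -- (3)
  have h3 : rk N₁ (R \ Y) = rk M✶ (R \ Y) := by
    rw [hN₁, rk_restrict, inter_eq_left.2 diff_subset]
  -- (4)
  have h4 : rk M✶ R + rank M = R.ncard + rk M X := by
    have := rk_dual hE hRE
    rwa [hR, diff_diff_cancel_left hX] at this
  -- (5)
  have h5 : rk M✶ (R \ Y) + rank M = (R \ Y).ncard + rk M (Y ∪ X) := by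
    have hsub : R \ Y ⊆ M.E := diff_subset.trans hRE
    have h := rk_dual hE hsub
    have heq : M.E \ (R \ Y) = Y ∪ X := by
      rw [hR, diff_diff, diff_diff_cancel_left (union_subset hX (hY.trans diff_subset)),
        union_comm]
    rwa [heq] at h
  -- (6)
  have h6 : Y.ncard + (R \ Y).ncard = R.ncard := by
    rw [add_comm]
    exact Set.ncard_diff_add_ncard_of_subset hY hRfin
  have hcc : contract M X = N₁✶ := rfl
  rw [hcc]
  omega

end DualRank

section CircuitExist

variable {M : Matroid α} {S : Set α}

lemma dep_exists_circuit_subset (hE : M.E.Finite) (hS : M.Dep S) :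
    ∃ C, C ⊆ S ∧ Circuit M C := by
  have key : ∀ (n : ℕ) (S : Set α), S.ncard = n → M.Dep S → ∃ C, C ⊆ S ∧ Circuit M C := by
    intro n
    induction n using Nat.strong_induction_on with
    | _ n ih =>
      intro S hcard hS
      by_cases h : ∀ D, D ⊂ S → M.Indep D
      · exact ⟨S, Subset.rfl, hS, h⟩
      push_neg at h
      obtain ⟨D, hDS, hD⟩ := h
      have hDdep : M.Dep D := ⟨hD, hDS.subset.trans hS.subset_ground⟩
      have hlt : D.ncard < n :=
        hcard ▸ Set.ncard_lt_ncard hDS (hE.subset hS.subset_ground)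
      obtain ⟨C, hCD, hC⟩ := ih _ hlt D rfl hDdep
      exact ⟨C, hCD.trans hDS.subset, hC⟩
  exact key S.ncard S rfl hS

lemma Circuit.nonempty {C : Set α} (hC : Circuit M C) : C.Nonempty := by
  rcases C.eq_empty_or_nonempty with rfl | h
  · exact absurd M.empty_indep hC.1.1
  · exact h

end CircuitExist

section LinearHelpers

variable {F : Type} [Field F] {W : Type} [AddCommGroup W] [Module F W]
variable {g : α → W} {I J Z : Set α}

open Module Submodule

lemma finrank_span_image_eq (hfin : I.Finite) (hinj : InjOn g I)
    (hli : LinearIndependent F (fun x : I => g x)) :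
    finrank F (span F (g '' I)) = I.ncard := by
  haveI : Fintype (g '' I) := (hfin.image g).fintype
  have h1 : LinearIndependent F ((↑) : (g '' I) → W) := by
    have := (linearIndepOn_iff_image hinj).1 hli
    exact this
  rw [finrank_span_set_eq_card h1, ← Set.ncard_eq_toFinset_card',
    Set.ncard_image_of_injOn hinj]

lemma inj_li_of_finrank_span_image (hfin : I.Finite)
    (h : finrank F (span F (g '' I)) = I.ncard) :
    InjOn g I ∧ LinearIndependent F (fun x : I => g x) := by
  haveI : Fintype (g '' I) := (hfin.image g).fintype
  have hle : finrank F (span F (g '' I)) ≤ (g '' I).ncard := by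
    rw [Set.ncard_eq_toFinset_card']
    exact finrank_span_le_card _
  have him : (g '' I).ncard ≤ I.ncard := Set.ncard_image_le hfin
  obtain ⟨b, hbsub, hbspan, hbli⟩ := exists_linearIndependent F (g '' I)
  have hbfin : b.Finite := (hfin.image g).subset hbsub
  haveI : Fintype b := hbfin.fintype
  have hbcard : finrank F (span F (g '' I)) = b.ncard := by
    rw [← hbspan, finrank_span_set_eq_card hbli, Set.ncard_eq_toFinset_card']
  have hbeq : b = g '' I :=
    Set.eq_of_subset_of_ncard_le hbsub (by omega) (hfin.image g)
  have hline : LinearIndependent F ((↑) : (g '' I) → W) := hbeq ▸ hbli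
  have hinj : InjOn g I := Set.injOn_of_ncard_image_eq (by omega) hfin
  exact ⟨hinj, (linearIndepOn_iff_image hinj).2 hline⟩

lemma mem_span_of_not_indep (hfin : I.Finite) (hinj : InjOn g I)
    (hli : LinearIndependent F (fun x : I => g x)) {e : α}
    (hnot : ¬ (InjOn g (insert e I) ∧ LinearIndependent F (fun x : ↥(insert e I) => g x))) :
    g e ∈ span F (g '' I) := by
  by_contra hmem
  have hgeI : g e ∉ g '' I := fun h => hmem (subset_span h)
  have hinj' : InjOn g (insert e I) := by
    intro a ha b hb hab
    rcases ha with rfl | ha <;> rcases hb with rfl | hb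
    · rfl
    · exact absurd (hab ▸ Set.mem_image_of_mem g hb) hgeI
    · exact absurd ⟨a, ha, hab⟩ hgeI
    · exact hinj ha hb hab
  apply hnot
  refine ⟨hinj', ?_⟩
  have hset : LinearIndependent F ((↑) : (g '' I) → W) := (linearIndepOn_iff_image hinj).1 hli
  have hins : LinearIndependent F ((↑) : ↥(insert (g e) (g '' I)) → W) :=
    LinearIndepOn.id_insert hset hmem
  have himg : g '' (insert e I) = insert (g e) (g '' I) := Set.image_insert_eq
  refine (linearIndepOn_iff_image hinj').2 ?_
  rw [himg]
  exact hins

lemma solve_mem_span {l : α →₀ F} (hl : Finsupp.linearCombination F g l = 0) {e : α}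
    (he : l e ≠ 0) (hsupp : ↑l.support ⊆ insert e Z) :
    g e ∈ span F (g '' Z) := by
  classical
  have hes : e ∈ l.support := Finsupp.mem_support_iff.2 he
  rw [Finsupp.linearCombination_apply, Finsupp.sum, ← Finset.add_sum_erase _ _ hes] at hl
  have h2 : l e • g e = - ∑ x ∈ l.support.erase e, l x • g x :=
    eq_neg_of_add_eq_zero_left hl
  have hge : g e = (l e)⁻¹ • (- ∑ x ∈ l.support.erase e, l x • g x) := by
    rw [← h2, inv_smul_smul₀ he]
  rw [hge]
  refine smul_mem _ _ (neg_mem (sum_mem fun x hx => smul_mem _ _ (subset_span ?_)))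
  have hxZ : x ∈ Z := by
    have hx' := hsupp (Finset.mem_of_mem_erase hx)
    rcases hx' with rfl | hx'
    · exact absurd rfl (Finset.ne_of_mem_erase hx)
    · exact hx'
  exact ⟨x, hxZ, rfl⟩

end LinearHelpers

section RepRank

variable {F : Type} [Field F] {W : Type} [AddCommGroup W] [Module F W]

open Module Submodule

lemma rk_eq_finrank_span {M : Matroid α} {g : α → W} (hE : M.E.Finite)
    (hrep : ∀ I ⊆ M.E, (M.Indep I ↔ InjOn g I ∧ LinearIndependent F (fun e : I => g e)))
    {Z : Set α} (hZ : Z ⊆ M.E) :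
    rk M Z = finrank F (span F (g '' Z)) := by
  obtain ⟨I, hI, hIcard⟩ := exists_basis'_rk hE Z
  have hIind := hI.indep
  have hIE := hIind.subset_ground
  have hIfin : I.Finite := hE.subset hIE
  obtain ⟨hinj, hli⟩ := (hrep I hIE).1 hIind
  rw [← hIcard, ← finrank_span_image_eq hIfin hinj hli]
  have hspan : span F (g '' I) = span F (g '' Z) := by
    apply le_antisymm (span_mono (Set.image_mono hI.subset))
    rw [span_le]
    rintro _ ⟨e, heZ, rfl⟩
    by_cases heI : e ∈ I
    · exact subset_span ⟨e, heI, rfl⟩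
    have hnot : ¬ M.Indep (insert e I) := hI.insert_not_indep ⟨heZ, heI⟩
    exact mem_span_of_not_indep hIfin hinj hli
      (fun h => hnot ((hrep _ (insert_subset (hZ heZ) hIE)).2 h))
  rw [hspan]

lemma finrank_map_mkQ_add (U V : Submodule F W) [FiniteDimensional F V] :
    finrank F (V.map U.mkQ) + finrank F ↥(V ⊓ U) = finrank F V := by
  have h := LinearMap.finrank_range_add_finrank_ker (U.mkQ.domRestrict V)
  rw [LinearMap.range_domRestrict, LinearMap.ker_domRestrict, Submodule.ker_mkQ] at h
  have heq : Submodule.comap V.subtype U = Submodule.comap V.subtype (V ⊓ U) := by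
    ext x; simp [x.2]
  rw [heq, (Submodule.comapSubtypeEquivOfLe (inf_le_left : V ⊓ U ≤ V)).finrank_eq] at h
  exact h

lemma aug_lin {g : α → W} {I J : Set α} (hIfin : I.Finite) (hJfin : J.Finite)
    (hI : InjOn g I ∧ LinearIndependent F (fun x : I => g x))
    (hJ : InjOn g J ∧ LinearIndependent F (fun x : J => g x))
    (hcard : I.ncard < J.ncard) :
    ∃ e ∈ J, e ∉ I ∧ InjOn g (insert e I) ∧
      LinearIndependent F (fun x : ↥(insert e I) => g x) := by
  haveI : FiniteDimensional F (span F (g '' I)) := FiniteDimensional.span_of_finite F (hIfin.image g)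
  haveI : FiniteDimensional F (span F (g '' J)) := FiniteDimensional.span_of_finite F (hJfin.image g)
  have hdimI := finrank_span_image_eq hIfin hI.1 hI.2
  have hdimJ := finrank_span_image_eq hJfin hJ.1 hJ.2
  have hex : ∃ e ∈ J, g e ∉ span F (g '' I) := by
    by_contra h
    push_neg at h
    have hle : span F (g '' J) ≤ span F (g '' I) := by
      rw [span_le]; rintro _ ⟨e, heJ, rfl⟩; exact h e heJ
    have := Submodule.finrank_mono hle
    omega
  obtain ⟨e, heJ, hespan⟩ := hex
  have heI : e ∉ I := fun h => hespan (subset_span ⟨e, h, rfl⟩)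
  have hgeI : g e ∉ g '' I := fun h => hespan (subset_span h)
  have hinj' : InjOn g (insert e I) := by
    intro a ha b hb hab
    rcases ha with rfl | ha <;> rcases hb with rfl | hb
    · rfl
    · exact absurd (⟨b, hb, hab.symm⟩ : g a ∈ g '' I) hgeI
    · exact absurd (⟨a, ha, hab⟩ : g b ∈ g '' I) hgeI
    · exact hI.1 ha hb hab
  refine ⟨e, heJ, heI, hinj', ?_⟩
  have hset : LinearIndependent F ((↑) : (g '' I) → W) := (linearIndepOn_iff_image hI.1).1 hI.2
  have hins := LinearIndepOn.id_insert hset hespan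
  refine (linearIndepOn_iff_image hinj').2 ?_
  rw [Set.image_insert_eq]
  exact hins

end RepRank


open Module Submodule

set_option maxHeartbeats 1000000 in
/-- If `K` is an `F`-representable matroid and `X` is a subset of its ground set, then there is
an `F`-representable matroid `N` on the circuits of `K/X` satisfying the lift condition for
`K/X` with `(K/X)^N = K ∖ X`. -/
theorem stmt2 {α : Type} (F : Type) [Field F] (K : Matroid α) (hK : K.E.Finite)
    (hrep : Representable K F) (X : Set α) (hX : X ⊆ K.E) :
    ∃ N : Matroid (Set α), Representable N F ∧ LiftCondition (contract K X) N ∧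
      (∀ Y ⊆ (contract K X).E,
        rk (delete K X) Y =
          rk (contract K X) Y + rk N {C | Circuit (contract K X) C ∧ C ⊆ Y}) := by
  classical
  obtain ⟨W, iW1, iW2, φ, hφ⟩ := hrep
  set R : Set α := K.E \ X with hR
  have hRfin : R.Finite := hK.subset diff_subset
  set M' : Matroid α := contract K X with hM'
  have hM'E : M'.E = R := rfl
  have hM'fin : M'.E.Finite := hRfin
  set U : Submodule F W := Submodule.span F (φ '' X) with hU
  haveI : FiniteDimensional F U := FiniteDimensional.span_of_finite F ((hK.subset hX).image φ)
  set f : α → W ⧸ U := fun a => U.mkQ (φ a) with hf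
  have hrkK : ∀ Z ⊆ K.E, rk K Z = finrank F (span F (φ '' Z)) :=
    fun Z hZ => rk_eq_finrank_span hK hφ hZ
  have hmap : ∀ Y : Set α, span F (f '' Y) = (span F (φ '' Y)).map U.mkQ := by
    intro Y
    rw [← Submodule.span_image]
    congr 1
    rw [← Set.image_image]
  have hFD : ∀ Y : Set α, Y.Finite → FiniteDimensional F (span F (φ '' Y)) :=
    fun Y hY => FiniteDimensional.span_of_finite F (hY.image φ)
  -- rank formula for the contraction
  have hrkM' : ∀ Y ⊆ R, rk M' Y = finrank F (span F (f '' Y)) := by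
    intro Y hY
    have hYE : Y ⊆ K.E := hY.trans diff_subset
    haveI := hFD Y (hK.subset hYE)
    have h1 : rk M' Y + rk K X = rk K (Y ∪ X) := rk_contract hK hX hY
    have h2 : rk K (Y ∪ X) = finrank F ↥(span F (φ '' Y) ⊔ U) := by
      rw [hrkK _ (union_subset hYE hX), Set.image_union, Submodule.span_union]
    have h3 := Submodule.finrank_sup_add_finrank_inf_eq (span F (φ '' Y)) U
    have h4 := finrank_map_mkQ_add U (span F (φ '' Y))
    have h5 : rk K X = finrank F U := hrkK X hX
    rw [hmap Y]
    omega
  -- representation of the contraction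
  have hrepM' : ∀ I ⊆ R, (M'.Indep I ↔ InjOn f I ∧
      LinearIndependent F (fun e : I => f e)) := by
    intro I hI
    have hIfin : I.Finite := hRfin.subset hI
    rw [indep_iff_rk hM'fin]
    constructor
    · rintro ⟨hIE, hrk⟩
      exact inj_li_of_finrank_span_image hIfin (by rw [← hrkM' I hI]; exact hrk)
    · intro h
      refine ⟨hI, ?_⟩
      rw [hrkM' I hI]
      exact finrank_span_image_eq hIfin h.1 h.2
  -- a dependent set supports a nonzero relation
  have hdep_rel : ∀ S, S ⊆ R → ¬ M'.Indep S →
      ∃ l : α →₀ F, l ≠ 0 ∧ ↑l.support ⊆ S ∧ Finsupp.linearCombination F f l = 0 := by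
    intro S hS hnind
    rw [hrepM' S hS] at hnind
    by_cases hinj : InjOn f S
    · have hnli : ¬ LinearIndependent F (fun e : S => f e) := fun h => hnind ⟨hinj, h⟩
      rw [show LinearIndependent F (fun e : S => f e) ↔ LinearIndepOn F f S from Iff.rfl,
        linearIndepOn_iff] at hnli
      push_neg at hnli
      obtain ⟨l, hl1, hl2, hl3⟩ := hnli
      exact ⟨l, hl3, Finsupp.mem_supported F l |>.1 hl1, hl2⟩
    · simp only [InjOn] at hinj
      push_neg at hinj
      obtain ⟨a, ha, b, hb, hab, hne⟩ := hinj
      refine ⟨Finsupp.single a 1 - Finsupp.single b 1, ?_, ?_, ?_⟩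
      · intro h
        have := congrFun (congrArg (⇑) h) a
        simp [Finsupp.single_eq_same, Finsupp.single_eq_of_ne' (Ne.symm hne)] at this
      · intro x hx
        rw [Finset.mem_coe, Finsupp.mem_support_iff] at hx
        by_contra hxS
        apply hx
        rw [Finsupp.sub_apply,
          Finsupp.single_eq_of_ne' (show a ≠ x by rintro rfl; exact hxS ha),
          Finsupp.single_eq_of_ne' (show b ≠ x by rintro rfl; exact hxS hb), sub_zero]
      · rw [map_sub, Finsupp.linearCombination_single, Finsupp.linearCombination_single,
          one_smul, one_smul, hab, sub_self]
  -- every circuit supports a relation with full support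
  have hcirc_rel : ∀ C, Circuit M' C →
      ∃ l : α →₀ F, ↑l.support = C ∧ Finsupp.linearCombination F f l = 0 := by
    intro C hC
    have hCR : C ⊆ R := hC.1.2
    obtain ⟨l, hl0, hlsupp, hlcomb⟩ := hdep_rel C hCR hC.1.1
    refine ⟨l, ?_, hlcomb⟩
    by_contra hne
    have hss : (↑l.support : Set α) ⊂ C := hlsupp.ssubset_of_ne hne
    have hind := hC.2 _ hss
    rw [hrepM' _ (hss.subset.trans hCR)] at hind
    exact hl0 (linearIndepOn_iff.1 hind.2 l
      (Finsupp.mem_supported F l |>.2 Subset.rfl) hlcomb)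
  -- choice of relations and the lift representation ψ
  set rel : Set α → (α →₀ F) := fun C =>
    if h : ∃ l : α →₀ F, ↑l.support = C ∧ Finsupp.linearCombination F f l = 0 then h.choose
    else 0 with hrel
  have hrel_spec : ∀ C, Circuit M' C →
      ↑(rel C).support = C ∧ Finsupp.linearCombination F f (rel C) = 0 := by
    intro C hC
    have h := hcirc_rel C hC
    simp only [hrel, dif_pos h]
    exact h.choose_spec
  set ψ : Set α → W := fun C => Finsupp.linearCombination F φ (rel C) with hψ
  have hmkQψ : ∀ C, Circuit M' C → U.mkQ (ψ C) = 0 := by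
    intro C hC
    rw [hψ]
    show U.mkQ (Finsupp.linearCombination F φ (rel C)) = 0
    rw [Finsupp.apply_linearCombination]
    exact (hrel_spec C hC).2
  have hψU : ∀ C, Circuit M' C → ψ C ∈ U := by
    intro C hC
    have := hmkQψ C hC
    rwa [Submodule.mkQ_apply, Submodule.Quotient.mk_eq_zero] at this
  -- the ground set of N
  set CS : Set (Set α) := {C | Circuit M' C} with hCS
  have hCSfin : CS.Finite := hRfin.finite_subsets.subset (fun C hC => hC.1.2)
  set NInd : Set (Set α) → Prop := fun I => I ⊆ CS ∧ InjOn ψ I ∧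
    LinearIndependent F (fun C : I => ψ C) with hNInd
  set N : Matroid (Set α) := (IndepMatroid.ofFinite hCSfin NInd
    ⟨empty_subset _, Set.injOn_empty _, linearIndependent_empty_type⟩
    (fun I J hJ hIJ => ⟨hIJ.trans hJ.1, hJ.2.1.mono hIJ,
      hJ.2.2.comp (Set.inclusion hIJ) (Set.inclusion_injective hIJ)⟩)
    (fun I J hI hJ hIJ => by
      obtain ⟨e, heJ, heI, hinj, hli⟩ :=
        aug_lin (hCSfin.subset hI.1) (hCSfin.subset hJ.1) hI.2 hJ.2 hIJ
      exact ⟨e, heJ, heI, insert_subset (hJ.1 heJ) hI.1, hinj, hli⟩)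
    (fun I hI => hI.1)).matroid with hN
  have hNE : N.E = CS := rfl
  have hNind : ∀ I, N.Indep I ↔ NInd I := fun I => by
    rw [hN]; exact IndepMatroid.matroid_indep_iff
  have hrepN : ∀ I ⊆ N.E, (N.Indep I ↔ InjOn ψ I ∧
      LinearIndependent F (fun C : I => ψ C)) := by
    intro I hI
    rw [hNind]
    exact ⟨fun h => h.2, fun h => ⟨hI, h⟩⟩
  have hNfin : N.E.Finite := hCSfin
  have hrkN : ∀ S ⊆ CS, rk N S = finrank F (span F (ψ '' S)) :=
    fun S hS => rk_eq_finrank_span hNfin hrepN hS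
  -- key span identity
  have hspan_eq : ∀ Y, Y ⊆ R →
      span F (ψ '' {C | Circuit M' C ∧ C ⊆ Y}) = span F (φ '' Y) ⊓ U := by
    intro Y hY
    apply le_antisymm
    · rw [span_le]
      rintro _ ⟨C, ⟨hC, hCY⟩, rfl⟩
      rw [SetLike.mem_coe, Submodule.mem_inf]
      constructor
      · exact (Finsupp.mem_span_image_iff_linearCombination F).2
          ⟨rel C, Finsupp.mem_supported F _ |>.2 (by rw [(hrel_spec C hC).1]; exact hCY), rfl⟩
      · exact hψU C hC
    · have key : ∀ (n : ℕ) (l : α →₀ F), l.support.card = n → ↑l.support ⊆ Y →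
          Finsupp.linearCombination F φ l ∈ U →
          Finsupp.linearCombination F φ l ∈ span F (ψ '' {C | Circuit M' C ∧ C ⊆ Y}) := by
        intro n
        induction n using Nat.strong_induction_on with
        | _ n ih =>
          intro l hlcard hlsupp hlU
          rcases eq_or_ne l 0 with rfl | hl0
          · simp
          have hfl : Finsupp.linearCombination F f l = 0 := by
            show Finsupp.linearCombination F (U.mkQ ∘ φ) l = 0
            rw [← Finsupp.apply_linearCombination, Submodule.mkQ_apply,
              Submodule.Quotient.mk_eq_zero]
            exact hlU
          have hsuppR : ↑l.support ⊆ R := hlsupp.trans hY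
          have hdep : M'.Dep ↑l.support := by
            refine ⟨fun hind => ?_, hsuppR⟩
            rw [hrepM' _ hsuppR] at hind
            exact hl0 (linearIndepOn_iff.1 hind.2 l
              (Finsupp.mem_supported F l |>.2 Subset.rfl) hfl)
          obtain ⟨C, hCsupp, hC⟩ := dep_exists_circuit_subset hM'fin hdep
          obtain ⟨e, he⟩ := hC.nonempty
          have hspec := hrel_spec C hC
          have hlCe : rel C e ≠ 0 :=
            Finsupp.mem_support_iff.1 (by rw [← Finset.mem_coe, hspec.1]; exact he)
          have hle : l e ≠ 0 :=
            Finsupp.mem_support_iff.1 (by rw [← Finset.mem_coe]; exact hCsupp he)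
          set c : F := l e / rel C e with hc
          set l' : α →₀ F := l - c • rel C with hl'
          have hl'supp : l'.support ⊆ l.support.erase e := by
            intro x hx
            have hx' : l' x ≠ 0 := Finsupp.mem_support_iff.1 hx
            rw [Finset.mem_erase]
            constructor
            · rintro rfl
              apply hx'
              rw [hl']
              simp only [Finsupp.sub_apply, Finsupp.smul_apply, smul_eq_mul, hc]
              field_simp
              simp
            · by_contra hxs
              apply hx'
              have h1 : l x = 0 := Finsupp.notMem_support_iff.1 hxs
              have h2 : rel C x = 0 := Finsupp.notMem_support_iff.1
                (fun hc2 => hxs (Finset.mem_coe.1 (by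
                  have : x ∈ C := by rw [← hspec.1]; exact hc2
                  exact Finset.mem_coe.2 (by exact_mod_cast hCsupp this))))
              rw [hl']
              simp [h1, h2]
          have hcard' : l'.support.card < n := by
            rw [← hlcard]
            exact lt_of_le_of_lt (Finset.card_le_card hl'supp)
              (Finset.card_erase_lt_of_mem (by rw [← Finset.mem_coe]; exact hCsupp he))
          have hl'suppY : ↑l'.support ⊆ Y := fun x hx =>
            hlsupp (Finset.mem_coe.2 (Finset.mem_of_mem_erase (hl'supp (Finset.mem_coe.1 hx))))
          have hψC : ψ C = Finsupp.linearCombination F φ (rel C) := rfl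
          have hl'U : Finsupp.linearCombination F φ l' ∈ U := by
            rw [hl', map_sub, map_smul]
            exact sub_mem hlU (Submodule.smul_mem _ _ (hψC ▸ hψU C hC))
          have ihres := ih _ hcard' l' rfl hl'suppY hl'U
          have hdecomp : Finsupp.linearCombination F φ l =
              Finsupp.linearCombination F φ l' + c • ψ C := by
            rw [hl', map_sub, map_smul, hψC, sub_add_cancel]
          rw [hdecomp]
          refine add_mem ihres (Submodule.smul_mem _ _ (subset_span ?_))
          exact ⟨C, ⟨hC, hCsupp.trans hlsupp⟩, rfl⟩
      rintro u hu
      rw [Submodule.mem_inf] at hu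
      obtain ⟨l, hl, rfl⟩ := (Finsupp.mem_span_image_iff_linearCombination F).1 hu.1
      exact key _ l rfl (Finsupp.mem_supported F l |>.1 hl) hu.2
  refine ⟨N, ⟨W, iW1, iW2, ψ, hrepN⟩, ⟨rfl, ?_⟩, ?_⟩
  · -- the lift condition
    have hzero : ∀ D, Circuit M' D → ∀ x, x ∉ D → rel D x = 0 := fun D hD x hx =>
      Finsupp.notMem_support_iff.1
        (fun h => hx (by rw [← (hrel_spec D hD).1]; exact Finset.mem_coe.2 h))
    have hnz : ∀ D, Circuit M' D → ∀ x, x ∈ D → rel D x ≠ 0 := fun D hD x hx =>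
      Finsupp.mem_support_iff.1 (by rw [← Finset.mem_coe, (hrel_spec D hD).1]; exact hx)
    have hcirc_card : ∀ C, Circuit M' C → C.ncard = rk M' C + 1 := by
      intro C hC
      have hCR : C ⊆ R := hC.1.2
      obtain ⟨e, he⟩ := hC.nonempty
      have hCfin : C.Finite := hRfin.subset hCR
      have hdiff : M'.Indep (C \ {e}) := hC.2 _ (Set.sdiff_singleton_ssubset.2 he)
      have h1 : rk M' (C \ {e}) = (C \ {e}).ncard := ((indep_iff_rk hM'fin).1 hdiff).2
      have hspec := hrel_spec C hC
      have hfe : f e ∈ span F (f '' (C \ {e})) :=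
        solve_mem_span hspec.2 (hnz C hC e he)
          (by rw [hspec.1, Set.insert_diff_singleton]; exact subset_insert e C)
      have h2 : span F (f '' C) = span F (f '' (C \ {e})) := by
        conv_lhs => rw [show C = insert e (C \ {e}) by
          rw [Set.insert_diff_singleton, Set.insert_eq_self.2 he]]
        rw [Set.image_insert_eq, Submodule.span_insert_eq_span hfe]
      have h3 : rk M' C = rk M' (C \ {e}) := by
        rw [hrkM' C hCR, hrkM' _ (diff_subset.trans hCR), h2]
      have h4 : (C \ {e}).ncard + 1 = C.ncard := Set.ncard_diff_singleton_add_one he hCfin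
      omega
    intro C₁ C₂ hC₁ hC₂ hcard C hC hCsub
    set Y₀ : Set α := C₁ ∪ C₂ with hY₀
    have hY₀R : Y₀ ⊆ R := union_subset hC₁.1.2 hC₂.1.2
    have hY₀fin : Y₀.Finite := hRfin.subset hY₀R
    have hne : C₁ ≠ C₂ := by
      rintro rfl
      rw [hY₀, union_self] at hcard
      have := hcirc_card C₁ hC₁
      omega
    have hinc : ∀ D₁ D₂, Circuit M' D₁ → Circuit M' D₂ → D₁ ≠ D₂ →
        ∃ x, x ∈ D₁ ∧ x ∉ D₂ := by
      intro D₁ D₂ h1 h2 hne12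
      by_contra h
      push_neg at h
      have hsub : D₁ ⊆ D₂ := h
      exact h1.1.1 (h2.2 _ (hsub.ssubset_of_ne hne12))
    obtain ⟨e₁, he₁C₁, he₁C₂⟩ := hinc C₁ C₂ hC₁ hC₂ hne
    obtain ⟨e₂, he₂C₂, he₂C₁⟩ := hinc C₂ C₁ hC₂ hC₁ (Ne.symm hne)
    have hne12 : e₁ ≠ e₂ := fun h => he₁C₂ (h ▸ he₂C₂)
    have he₁Y₀ : e₁ ∈ Y₀ := Or.inl he₁C₁
    have he₂Y₀ : e₂ ∈ Y₀ := Or.inr he₂C₂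
    set Z : Set α := Y₀ \ {e₁, e₂} with hZdef
    have hZY₀ : Z ⊆ Y₀ := diff_subset
    have l₁spec := hrel_spec C₁ hC₁
    have l₂spec := hrel_spec C₂ hC₂
    have lCspec := hrel_spec C hC
    have hZ' : Z = (Y₀ \ {e₁}) \ {e₂} := by
      rw [hZdef, Set.diff_diff, Set.singleton_union]
    have he₂mem : e₂ ∈ Y₀ \ {e₁} :=
      ⟨he₂Y₀, fun h => hne12 (Set.mem_singleton_iff.1 h).symm⟩
    have hins2 : insert e₂ Z = Y₀ \ {e₁} := by
      rw [hZ', Set.insert_diff_singleton, Set.insert_eq_self.2 he₂mem]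
    have hins1 : insert e₁ (Y₀ \ {e₁}) = Y₀ := by
      rw [Set.insert_diff_singleton, Set.insert_eq_self.2 he₁Y₀]
    have hf1 : f e₁ ∈ span F (f '' (Y₀ \ {e₁})) :=
      solve_mem_span l₁spec.2 (hnz C₁ hC₁ e₁ he₁C₁)
        (by rw [l₁spec.1, hins1]; exact subset_union_left)
    have hf2 : f e₂ ∈ span F (f '' Z) :=
      solve_mem_span l₂spec.2 (hnz C₂ hC₂ e₂ he₂C₂)
        (by rw [l₂spec.1, hins2]
            exact fun x hx => ⟨Or.inr hx, fun hxe =>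
              he₁C₂ ((Set.mem_singleton_iff.1 hxe) ▸ hx)⟩)
    have hsp2 : span F (f '' (Y₀ \ {e₁})) = span F (f '' Z) := by
      rw [← hins2, Set.image_insert_eq, Submodule.span_insert_eq_span hf2]
    have hsp1 : span F (f '' Y₀) = span F (f '' Z) := by
      rw [← hins1, Set.image_insert_eq, Submodule.span_insert_eq_span (hsp2 ▸ hf1), hsp2]
    have hsubpair : ({e₁, e₂} : Set α) ⊆ Y₀ := by
      rintro x (rfl | hx)
      · exact he₁Y₀
      · exact (Set.mem_singleton_iff.1 hx) ▸ he₂Y₀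
    have hZcard : Z.ncard + 2 = Y₀.ncard := by
      have h := Set.ncard_diff_add_ncard_of_subset hsubpair hY₀fin
      rwa [Set.ncard_pair hne12] at h
    have hdimZ : finrank F (span F (f '' Z)) = Z.ncard := by
      have h1 : rk M' Y₀ = finrank F (span F (f '' Y₀)) := hrkM' _ hY₀R
      rw [← hsp1, ← h1]
      omega
    obtain ⟨hZinj, hZli⟩ := inj_li_of_finrank_span_image (hY₀fin.subset hZY₀) hdimZ
    set a : F := rel C e₁ * (rel C₁ e₁)⁻¹ with hadef
    set b : F := rel C e₂ * (rel C₂ e₂)⁻¹ with hbdef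
    set l' : α →₀ F := rel C - a • rel C₁ - b • rel C₂ with hl'def
    have hl'comb : Finsupp.linearCombination F f l' = 0 := by
      rw [hl'def, map_sub, map_sub, map_smul, map_smul, lCspec.2, l₁spec.2, l₂spec.2]
      simp
    have hl'supp : ↑l'.support ⊆ Z := by
      intro x hx
      rw [Finset.mem_coe, Finsupp.mem_support_iff] at hx
      rw [hl'def] at hx
      simp only [Finsupp.sub_apply, Finsupp.smul_apply, smul_eq_mul] at hx
      constructor
      · by_contra hxY
        apply hx
        rw [hzero C hC x (fun h => hxY (hCsub h)),
          hzero C₁ hC₁ x (fun h => hxY (Or.inl h)),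
          hzero C₂ hC₂ x (fun h => hxY (Or.inr h)), mul_zero, mul_zero, sub_zero, sub_zero]
      · rintro (rfl | hxe)
        · apply hx
          rw [hzero C₂ hC₂ x he₁C₂, mul_zero, sub_zero, hadef, mul_assoc,
            inv_mul_cancel₀ (hnz C₁ hC₁ x he₁C₁), mul_one, sub_self]
        · rw [Set.mem_singleton_iff] at hxe
          subst hxe
          apply hx
          rw [hzero C₁ hC₁ x he₂C₁, mul_zero, sub_zero, hbdef, mul_assoc,
            inv_mul_cancel₀ (hnz C₂ hC₂ x he₂C₂), mul_one, sub_self]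
    have hl'0 : l' = 0 :=
      linearIndepOn_iff.1 hZli l' (Finsupp.mem_supported F l' |>.2 hl'supp) hl'comb
    have hrelC_eq : rel C = a • rel C₁ + b • rel C₂ := by
      rw [hl'def, sub_sub, sub_eq_zero] at hl'0
      exact hl'0
    have hψeq : ψ C = a • ψ C₁ + b • ψ C₂ := by
      show Finsupp.linearCombination F φ (rel C) = _
      rw [hrelC_eq, map_add, map_smul, map_smul]
    have hCE : C ∈ N.E := hC
    have hpairE : ({C₁, C₂} : Set (Set α)) ⊆ N.E := by
      rintro D (rfl | hD)
      · exact hC₁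
      · exact (Set.mem_singleton_iff.1 hD) ▸ hC₂
    obtain ⟨J, hJ⟩ := N.exists_isBasis {C₁, C₂} hpairE
    have hJcl : N.closure J = N.closure {C₁, C₂} := hJ.closure_eq_closure
    by_cases hCJ : C ∈ J
    · rw [← hJcl]
      exact N.subset_closure J hJ.indep.subset_ground hCJ
    have hJindN := hJ.indep
    obtain ⟨hJinj, hJli⟩ := (hrepN J hJindN.subset_ground).1 hJindN
    have hJfin : J.Finite := hNfin.subset hJindN.subset_ground
    have hJcard : finrank F (span F (ψ '' J)) = J.ncard :=
      finrank_span_image_eq hJfin hJinj hJli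
    have hrkpair : rk N {C₁, C₂} = J.ncard := rk_eq_ncard_of_basis' hNfin hJ.isBasis'
    haveI : FiniteDimensional F (span F (ψ '' {C₁, C₂})) :=
      FiniteDimensional.span_of_finite F (((Set.finite_singleton C₂).insert C₁).image ψ)
    have hspanJ : span F (ψ '' J) = span F (ψ '' {C₁, C₂}) := by
      apply Submodule.eq_of_le_of_finrank_le (span_mono (Set.image_mono hJ.subset))
      rw [hJcard, ← hrkpair, hrkN _ hpairE]
    have hψC_mem : ψ C ∈ span F (ψ '' J) := by
      rw [hspanJ, hψeq]
      exact add_mem (Submodule.smul_mem _ _ (subset_span ⟨C₁, Or.inl rfl, rfl⟩))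
        (Submodule.smul_mem _ _ (subset_span ⟨C₂, Or.inr rfl, rfl⟩))
    have hdepins : N.Dep (insert C J) := by
      rw [dep_iff]
      refine ⟨fun hind => ?_, insert_subset hCE hJindN.subset_ground⟩
      obtain ⟨hinj, hli⟩ := (hrepN _ hind.subset_ground).1 hind
      have hcard2 : finrank F (span F (ψ '' insert C J)) = (insert C J).ncard :=
        finrank_span_image_eq (hJfin.insert C) hinj hli
      rw [Set.image_insert_eq, Submodule.span_insert_eq_span hψC_mem, hJcard,
        Set.ncard_insert_of_notMem hCJ hJfin] at hcard2
      omega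
    rw [← hJcl]
    exact hJindN.mem_closure_iff.2 (Or.inl hdepins)
  · -- rank identity
    intro Y hY
    have hYR : Y ⊆ R := hY
    have hYE : Y ⊆ K.E := hYR.trans diff_subset
    haveI := hFD Y (hK.subset hYE)
    have hdel : rk (delete K X) Y = rk K Y := by
      rw [delete, rk_restrict, inter_eq_left.2 hYR]
    have h1 : rk K Y = finrank F (span F (φ '' Y)) := hrkK Y hYE
    have h2 : rk M' Y = finrank F ↥((span F (φ '' Y)).map U.mkQ) := by
      rw [hrkM' Y hYR, hmap Y]
    have h3 : rk N {C | Circuit M' C ∧ C ⊆ Y} = finrank F ↥(span F (φ '' Y) ⊓ U) := by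
      rw [hrkN _ (fun C hC => hC.1), hspan_eq Y hYR]
    have h4 := finrank_map_mkQ_add U (span F (φ '' Y))
    omega


end PaperLift
end

section
/- Let r ≥ 4 and t ≥ 3 be integers with r ≤ 2t−2, and let K be a rank-r matroid on ground set [2t+2] in which every r-element subset is either a basis or a circuit-hyperplane and whose circuit-hyperplanes are exactly the members of 𝒞'(r,t) ∪ 𝒞''(r,t). Then K is not representable over any field. -/
open Set Matroid
open scoped Matroid

namespace PaperLift

variable {α : Type} {β : Type}

section Aux

/-- the circulant shift function -/
def gfun (t i k : ℕ) : ℕ := (k + 2 * (i - 1) - 1) % (2 * t) + 1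

def Cfin (r t i : ℕ) : Finset ℕ := (Finset.Icc 1 (r - 2)).image (gfun t i)
def Bfin (r t i : ℕ) : Finset ℕ := (Finset.Icc 1 r).image (gfun t i)
def Afin (r t i : ℕ) : Finset ℕ := Cfin r t i ∪ {2*t+1, 2*t+2}

lemma coe_Cfin (r t i : ℕ) : (↑(Cfin r t i) : Set ℕ) = Ci r t i := by
  rw [Cfin, Finset.coe_image, Finset.coe_Icc]; rfl

lemma gfun_mem (t i k : ℕ) (ht : 1 ≤ t) : 1 ≤ gfun t i k ∧ gfun t i k ≤ 2*t := by
  have := Nat.mod_lt (k + 2*(i-1) - 1) (show 0 < 2*t by omega)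
  unfold gfun; omega

lemma gfun_inj {t n i k k' : ℕ} (hn : n ≤ 2*t) (hk : k ∈ Finset.Icc 1 n)
    (hk' : k' ∈ Finset.Icc 1 n) (h : gfun t i k = gfun t i k') : k = k' := by
  simp only [Finset.mem_Icc] at hk hk'
  have h' : (k + 2*(i-1) - 1) % (2*t) = (k' + 2*(i-1) - 1) % (2*t) := by
    unfold gfun at h; omega
  rcases le_total k k' with hle | hle
  · have hd : (2*t) ∣ (k' + 2*(i-1) - 1) - (k + 2*(i-1) - 1) :=
      (Nat.modEq_iff_dvd' (by omega)).mp h'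
    have := Nat.eq_zero_of_dvd_of_lt hd
    omega
  · have hd : (2*t) ∣ (k + 2*(i-1) - 1) - (k' + 2*(i-1) - 1) :=
      (Nat.modEq_iff_dvd' (by omega)).mp h'.symm
    have := Nat.eq_zero_of_dvd_of_lt hd
    omega

lemma gfun_one {t k : ℕ} (hk1 : 1 ≤ k) (hk : k ≤ 2*t) : gfun t 1 k = k := by
  unfold gfun
  rw [show 2 * (1 - 1) = 0 from rfl]
  rw [Nat.mod_eq_of_lt (by omega)]; omega

lemma gfun_succ {t i : ℕ} (hi : 1 ≤ i) (k : ℕ) : gfun t (i+1) k = gfun t i (k+2) := by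
  unfold gfun
  rw [show k + 2*(i+1-1) - 1 = k + 2 + 2*(i-1) - 1 by omega]

lemma gfun_wrap {t : ℕ} {k : ℕ} (hk : 1 ≤ k) : gfun t (t+1) k = gfun t 1 k := by
  unfold gfun
  have h : k + 2*((t+1)-1) - 1 = (k + 2*(1-1) - 1) + 2*t := by omega
  rw [h, Nat.add_mod_right]

lemma gfun_t1 {t : ℕ} (ht : 1 ≤ t) : gfun t t 1 = 2*t - 1 := by
  unfold gfun
  rw [show 1 + 2*(t-1) - 1 = 2*t - 2 by omega, Nat.mod_eq_of_lt (by omega)]; omega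

lemma gfun_t2 {t : ℕ} (ht : 1 ≤ t) : gfun t t 2 = 2*t := by
  unfold gfun
  rw [show 2 + 2*(t-1) - 1 = 2*t - 1 by omega, Nat.mod_eq_of_lt (by omega)]; omega

lemma gfun_t_small {t k : ℕ} (ht : 1 ≤ t) (h3 : 3 ≤ k) (hk : k ≤ 2*t + 2) :
    gfun t t k = k - 2 := by
  unfold gfun
  have h : k + 2*(t-1) - 1 = (k - 3) + 2*t := by omega
  rw [h, Nat.add_mod_right, Nat.mod_eq_of_lt (by omega)]; omega

lemma Bfin_eq_union (r t : ℕ) (hr : 4 ≤ r) {i : ℕ} (hi : 1 ≤ i) :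
    Bfin r t i = Cfin r t i ∪ Cfin r t (i+1) := by
  have hIcc : Finset.Icc 1 r = Finset.Icc 1 (r-2) ∪ (Finset.Icc 1 (r-2)).image (· + 2) := by
    ext x
    simp only [Finset.mem_union, Finset.mem_Icc, Finset.mem_image]
    constructor
    · intro hx
      by_cases h : x ≤ r - 2
      · exact Or.inl ⟨hx.1, h⟩
      · exact Or.inr ⟨x - 2, by omega⟩
    · rintro (h | ⟨k, hk, rfl⟩) <;> omega
  rw [Bfin, hIcc, Finset.image_union, Finset.image_image]
  congr 1
  rw [Cfin]
  apply Finset.image_congr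
  intro k _
  exact (gfun_succ hi k).symm

lemma card_Bfin (r t : ℕ) (hrt : r + 2 ≤ 2*t) (i : ℕ) : (Bfin r t i).card = r := by
  rw [Bfin, Finset.card_image_of_injOn, Nat.card_Icc]
  · omega
  · intro k hk k' hk' h
    exact gfun_inj (n := r) (by omega) hk hk' h

lemma card_Cfin (r t : ℕ) (hrt : r + 2 ≤ 2*t) (i : ℕ) : (Cfin r t i).card = r - 2 := by
  rw [Cfin, Finset.card_image_of_injOn, Nat.card_Icc]
  · omega
  · intro k hk k' hk' h
    exact gfun_inj (n := r - 2) (by omega) hk hk' h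

lemma Cfin_le (r t i : ℕ) (ht : 1 ≤ t) : ∀ x ∈ Cfin r t i, 1 ≤ x ∧ x ≤ 2*t := by
  intro x hx
  obtain ⟨k, _, rfl⟩ := Finset.mem_image.mp hx
  exact gfun_mem t i k ht

lemma Bfin_le (r t i : ℕ) (ht : 1 ≤ t) : ∀ x ∈ Bfin r t i, 1 ≤ x ∧ x ≤ 2*t := by
  intro x hx
  obtain ⟨k, _, rfl⟩ := Finset.mem_image.mp hx
  exact gfun_mem t i k ht

lemma card_Afin (r t : ℕ) (hr : 4 ≤ r) (ht : 1 ≤ t) (hrt : r + 2 ≤ 2*t) (i : ℕ) :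
    (Afin r t i).card = r := by
  rw [Afin, Finset.card_union_of_disjoint, card_Cfin r t hrt]
  · have : ({2*t+1, 2*t+2} : Finset ℕ).card = 2 := by
      rw [Finset.card_insert_of_notMem (by simp), Finset.card_singleton]
    omega
  · rw [Finset.disjoint_left]
    intro x hx hx2
    have := Cfin_le r t i ht x hx
    simp only [Finset.mem_insert, Finset.mem_singleton] at hx2
    omega

lemma coe_Afin (r t i : ℕ) : (↑(Afin r t i) : Set ℕ) = Ci r t i ∪ {2*t+1, 2*t+2} := by
  rw [Afin, Finset.coe_union, coe_Cfin]
  congr 1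
  simp

lemma Afin_mem_CC' (r t : ℕ) {i : ℕ} (hi1 : 1 ≤ i) (hit : i ≤ t) :
    (↑(Afin r t i) : Set ℕ) ∈ CC' r t := by
  exact ⟨i, ⟨hi1, hit⟩, (coe_Afin r t i).symm⟩

lemma coe_Bfin (r t : ℕ) (hr : 4 ≤ r) {i : ℕ} (hi : 1 ≤ i) :
    (↑(Bfin r t i) : Set ℕ) = Ci r t i ∪ Ci r t (i+1) := by
  rw [Bfin_eq_union r t hr hi, Finset.coe_union, coe_Cfin, coe_Cfin]

lemma Bfin_mem_CC'' (r t : ℕ) (hr : 4 ≤ r) {i : ℕ} (hi1 : 1 ≤ i) (hit : i ≤ t - 1) :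
    (↑(Bfin r t i) : Set ℕ) ∈ CC'' r t := by
  exact ⟨i, ⟨hi1, hit⟩, (coe_Bfin r t hr hi1).symm⟩

/-- membership characterization for `Bfin r t t` -/
lemma mem_Bfin_t {r t x : ℕ} (hr : 4 ≤ r) (ht : 1 ≤ t) (hrt : r + 2 ≤ 2*t)
    (hx : x ∈ Bfin r t t) : x = 2*t - 1 ∨ x = 2*t ∨ (1 ≤ x ∧ x ≤ r - 2) := by
  obtain ⟨k, hk, rfl⟩ := Finset.mem_image.mp hx
  simp only [Finset.mem_Icc] at hk
  rcases Nat.lt_or_ge k 3 with h3 | h3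
  · have hk12 : k = 1 ∨ k = 2 := by omega
    rcases hk12 with rfl | rfl
    · exact Or.inl (gfun_t1 ht)
    · exact Or.inr (Or.inl (gfun_t2 ht))
  · rw [gfun_t_small ht h3 (by omega)]
    omega

lemma two_t_mem_Bfin_t {r t : ℕ} (hr : 4 ≤ r) (ht : 1 ≤ t) :
    2*t ∈ Bfin r t t := by
  rw [← gfun_t2 ht]
  exact Finset.mem_image_of_mem _ (by simp [Finset.mem_Icc]; omega)

lemma two_t_sub_two_not_mem_Bfin_t {r t : ℕ} (hr : 4 ≤ r) (ht : 3 ≤ t) (hrt : r + 2 ≤ 2*t) :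
    2*t - 2 ∉ Bfin r t t := by
  intro h
  have := mem_Bfin_t hr (by omega) hrt h
  omega

/-- if `2t ∈ Bfin r t i` for `i ≤ t - 1`, then `2t - 2 ∈ Bfin r t i` -/
lemma two_t_sub_two_mem {r t i : ℕ} (hr : 4 ≤ r) (ht : 3 ≤ t) (hrt : r + 2 ≤ 2*t)
    (hi1 : 1 ≤ i) (hit : i ≤ t - 1) (h : 2*t ∈ Bfin r t i) : 2*t - 2 ∈ Bfin r t i := by
  obtain ⟨k, hk, hgk⟩ := Finset.mem_image.mp h
  simp only [Finset.mem_Icc] at hk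
  have hmod : (k + 2*(i-1) - 1) % (2*t) = 2*t - 1 := by unfold gfun at hgk; omega
  have hmeq : k + 2*(i-1) - 1 = 2*t - 1 := by
    rcases Nat.lt_or_ge (k + 2*(i-1) - 1) (2*t) with hlt | hge
    · rw [Nat.mod_eq_of_lt hlt] at hmod; omega
    · have h2 : (k + 2*(i-1) - 1) % (2*t) = (k + 2*(i-1) - 1) - 2*t := by
        rw [Nat.mod_eq_sub_mod hge]
        exact Nat.mod_eq_of_lt (by omega)
      omega
  have hk' : 2*t - 2*i ∈ Finset.Icc 1 r := by
    simp only [Finset.mem_Icc]; omega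
  have hval : gfun t i (2*t - 2*i) = 2*t - 2 := by
    unfold gfun
    rw [show 2*t - 2*i + 2*(i-1) - 1 = 2*t - 3 by omega, Nat.mod_eq_of_lt (by omega)]
    omega
  rw [← hval]
  exact Finset.mem_image_of_mem _ hk'

lemma Bfin_t_not_mem_CC'' (r t : ℕ) (hr : 4 ≤ r) (ht : 3 ≤ t) (hrt : r + 2 ≤ 2*t) :
    (↑(Bfin r t t) : Set ℕ) ∉ CC'' r t := by
  rintro ⟨i, hi, heq⟩
  simp only [Set.mem_Icc] at hi
  replace heq : Ci r t i ∪ Ci r t (i+1) = ↑(Bfin r t t) := heq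
  rw [← coe_Bfin r t hr hi.1] at heq
  have hcoe : Bfin r t i = Bfin r t t := Finset.coe_injective heq
  have h2t : 2*t ∈ Bfin r t i := hcoe ▸ two_t_mem_Bfin_t hr (by omega)
  have := two_t_sub_two_mem hr ht hrt hi.1 hi.2 h2t
  rw [hcoe] at this
  exact two_t_sub_two_not_mem_Bfin_t hr ht hrt this

lemma r_sub_two_mem_Cfin_one {r t : ℕ} (hr : 4 ≤ r) (hrt : r + 2 ≤ 2*t) :
    r - 2 ∈ Cfin r t 1 := by
  have : gfun t 1 (r-2) = r - 2 := gfun_one (by omega) (by omega)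
  rw [← this]
  exact Finset.mem_image_of_mem _ (by simp [Finset.mem_Icc]; omega)

lemma r_sub_two_not_mem_Cfin_t {r t : ℕ} (hr : 4 ≤ r) (ht : 3 ≤ t) (hrt : r + 2 ≤ 2*t) :
    r - 2 ∉ Cfin r t t := by
  intro h
  obtain ⟨k, hk, hgk⟩ := Finset.mem_image.mp h
  simp only [Finset.mem_Icc] at hk
  rcases Nat.lt_or_ge k 3 with h3 | h3
  · have hk12 : k = 1 ∨ k = 2 := by omega
    rcases hk12 with rfl | rfl
    · rw [gfun_t1 (by omega)] at hgk; omega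
    · rw [gfun_t2 (by omega)] at hgk; omega
  · rw [gfun_t_small (by omega) h3 (by omega)] at hgk; omega

lemma Cfin_wrap (r t : ℕ) : Cfin r t (t+1) = Cfin r t 1 := by
  apply Finset.image_congr
  intro k hk
  simp only [Finset.coe_Icc, Set.mem_Icc] at hk
  exact gfun_wrap hk.1


variable {F W : Type} [Field F] [AddCommGroup W] [Module F W]
variable {K : Matroid ℕ} {φ : ℕ → W}

/-- From a representation, an independent finset gives trivial relations only. -/
lemma zero_of_indep
    (hrep : ∀ I ⊆ K.E, (K.Indep I ↔ InjOn φ I ∧ LinearIndependent F (fun e : I => φ e)))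
    (s : Finset ℕ) (hI : K.Indep ↑s) (lam : ℕ → F)
    (hsum : ∑ c ∈ s, lam c • φ c = 0) : ∀ c ∈ s, lam c = 0 := by
  have hLI : LinearIndependent F (fun e : (↑s : Set ℕ) => φ e) :=
    ((hrep ↑s hI.subset_ground).mp hI).2
  intro c hc
  have := Fintype.linearIndependent_iff.mp hLI (fun e => lam e) ?_ ⟨c, by simpa using hc⟩
  · exact this
  · rw [Finset.sum_finset_coe (f := fun c => lam c • φ c)]
    exact hsum

/-- A circuit (of size ≥ 3) gives a linear relation with all coefficients nonzero. -/
lemma rel_of_circuit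
    (hrep : ∀ I ⊆ K.E, (K.Indep I ↔ InjOn φ I ∧ LinearIndependent F (fun e : I => φ e)))
    (s : Finset ℕ) (hC : Circuit K ↑s) (h3 : 3 ≤ s.card) :
    ∃ lam : ℕ → F, (∀ c ∈ s, lam c ≠ 0) ∧ ∑ c ∈ s, lam c • φ c = 0 := by
  classical
  have hE : (↑s : Set ℕ) ⊆ K.E := hC.1.subset_ground
  have hdep : ¬ K.Indep ↑s := hC.1.not_indep
  have hinj : InjOn φ ↑s := by
    intro x hx y hy hxy
    by_contra hne
    have hss : ({x, y} : Set ℕ) ⊂ ↑s := by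
      constructor
      · intro z hz; rcases hz with rfl | rfl; exacts [hx, hy]
      · intro hsub
        have h2 : (↑s : Set ℕ).ncard ≤ 2 := by
          calc (↑s : Set ℕ).ncard ≤ ({x, y} : Set ℕ).ncard :=
                Set.ncard_le_ncard hsub (Set.toFinite _)
            _ ≤ 2 := by
                simpa using Set.ncard_insert_le x {y}
        rw [Set.ncard_coe_finset] at h2
        omega
    have hind := hC.2 _ hss
    have := ((hrep _ (hind.subset_ground)).mp hind).1
    exact hne (this (by simp) (by simp) hxy)
  have hnLI : ¬ LinearIndependent F (fun e : (↑s : Set ℕ) => φ e) := by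
    intro h
    exact hdep ((hrep ↑s hE).mpr ⟨hinj, h⟩)
  obtain ⟨g, hg0, i₀, hi₀⟩ := Fintype.not_linearIndependent_iff.mp hnLI
  set lam : ℕ → F := fun c => if h : c ∈ s then g ⟨c, by simpa using h⟩ else 0 with hlam
  have hsum : ∑ c ∈ s, lam c • φ c = 0 := by
    rw [← Finset.sum_finset_coe (f := fun c => lam c • φ c)]
    rw [← hg0]
    apply Finset.sum_congr rfl
    rintro ⟨x, hx⟩ -
    simp only [hlam]
    rw [dif_pos (by simpa using hx)]
  refine ⟨lam, ?_, hsum⟩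
  intro c₀ hc₀ h0
  have hall : ∀ c ∈ s, lam c = 0 := by
    have hss : (↑(s.erase c₀) : Set ℕ) ⊂ ↑s := by
      rw [Finset.coe_erase]
      exact Set.sdiff_singleton_ssubset.mpr (by simpa using hc₀)
    have hind := hC.2 _ hss
    have hz := zero_of_indep hrep (s.erase c₀) hind lam ?_
    · intro c hc
      by_cases h : c = c₀
      · rwa [h]
      · exact hz c (Finset.mem_erase.mpr ⟨h, hc⟩)
    · rw [Finset.sum_erase _ (by rw [h0, zero_smul])]
      exact hsum
  have : lam ↑i₀ ≠ 0 := by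
    simp only [hlam]
    rw [dif_pos (by simpa using i₀.2)]
    convert hi₀
  exact this (hall ↑i₀ (by simpa using i₀.2))


/-- If `s` is a circuit and swapping any one element for `x` yields a base,
then `φ x` is not in the span of `φ '' s`. -/
lemma not_mem_span_circuit
    (hrep : ∀ I ⊆ K.E, (K.Indep I ↔ InjOn φ I ∧ LinearIndependent F (fun e : I => φ e)))
    (s : Finset ℕ) (hC : Circuit K ↑s) (h3 : 3 ≤ s.card)
    (x : ℕ) (hx : x ∉ s) (e : ℕ) (he : e ∈ s)
    (hbase : K.IsBase ↑(insert x (s.erase e))) :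
    φ x ∉ Submodule.span F (φ '' ↑s) := by
  classical
  intro hmem
  obtain ⟨lam, hne, hsum⟩ := rel_of_circuit hrep s hC h3
  -- φ e ∈ span of the rest
  have hes : φ e ∈ Submodule.span F (φ '' ↑(s.erase e)) := by
    have hl := hne e he
    have h1 : ∑ c ∈ s.erase e, lam c • φ c + lam e • φ e = 0 := by
      rw [Finset.sum_erase_add _ _ he]; exact hsum
    have h2 : φ e = (lam e)⁻¹ • (-(∑ c ∈ s.erase e, lam c • φ c)) := by
      rw [← eq_neg_of_add_eq_zero_right h1, inv_smul_smul₀ hl]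
    rw [h2]
    refine Submodule.smul_mem _ _ (Submodule.neg_mem _ (Submodule.sum_mem _ ?_))
    intro c hc
    refine Submodule.smul_mem _ _ (Submodule.subset_span ⟨c, ?_, rfl⟩)
    simp only [Finset.coe_erase, Set.mem_diff, Set.mem_singleton_iff]
    exact ⟨Finset.mem_of_mem_erase hc, Finset.ne_of_mem_erase hc⟩
  -- span φ '' s ≤ span φ '' (erase)
  have hspan : Submodule.span F (φ '' ↑s) ≤ Submodule.span F (φ '' ↑(s.erase e)) := by
    rw [Submodule.span_le]
    rintro - ⟨c, hc, rfl⟩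
    by_cases hce : c = e
    · rw [hce]; exact hes
    · refine Submodule.subset_span ⟨c, ?_, rfl⟩
      simp only [Finset.coe_erase, Set.mem_diff, Set.mem_singleton_iff]
      exact ⟨hc, hce⟩
  -- base gives linear independence of insert x (erase)
  have hind := hbase.indep
  have hLI := ((hrep _ hind.subset_ground).mp hind).2
  have hxe : x ∉ (↑(s.erase e) : Set ℕ) := by
    simp only [Finset.coe_erase, Set.mem_diff]
    intro h; exact hx (by simpa using h.1)
  rw [show ((↑(insert x (s.erase e)) : Set ℕ)) = insert x (↑(s.erase e) : Set ℕ) from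
    Finset.coe_insert x (s.erase e)] at hLI
  have := ((linearIndepOn_insert hxe).mp hLI).2
  exact this (hspan hmem)


end Aux

lemma Ci_le {r t i : ℕ} (ht : 1 ≤ t) : ∀ x ∈ Ci r t i, 1 ≤ x ∧ x ≤ 2*t := by
  rintro x ⟨k, hk, rfl⟩
  exact gfun_mem t i k ht

lemma CC'_mem_tt {r t : ℕ} {S : Set ℕ} (h : S ∈ CC' r t) : 2*t+2 ∈ S := by
  obtain ⟨j, hj, rfl⟩ := h
  exact Or.inr (by simp)

lemma CC''_le {r t : ℕ} (ht : 1 ≤ t) {S : Set ℕ} (h : S ∈ CC'' r t) :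
    ∀ x ∈ S, x ≤ 2*t := by
  obtain ⟨j, hj, rfl⟩ := h
  rintro x (hx | hx)
  · exact (Ci_le ht x hx).2
  · exact (Ci_le ht x hx).2

/-- The matroid `K(r,t)` is not representable over any field. -/
theorem stmt4 (r t : ℕ) (hr : 4 ≤ r) (ht : 3 ≤ t) (hrt : r + 2 ≤ 2 * t)
    (K : Matroid ℕ) (hK : IsKrt r t K) :
    ∀ (F : Type) [Field F], ¬ Representable K F := by
  rintro F _ ⟨W, _, _, φ, hrep⟩
  classical
  obtain ⟨hE, -, hsp, hCH⟩ := hK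
  have ht1 : 1 ≤ t := by omega
  -- helper: a non-listed r-set is a base
  have hbase_of : ∀ s : Finset ℕ, (↑s : Set ℕ) ⊆ K.E → s.card = r →
      (↑s : Set ℕ) ∉ CC' r t → (↑s : Set ℕ) ∉ CC'' r t → K.IsBase ↑s := by
    intro s hsub hcard h1 h2
    rcases hsp ↑s hsub (by rw [Set.ncard_coe_finset]; exact hcard) with hb | hch
    · exact hb
    · rw [hCH] at hch
      rcases hch with h | h
      · exact absurd h h1
      · exact absurd h h2
  -- circuits
  have hcircA : ∀ i, 1 ≤ i → i ≤ t → Circuit K ↑(Afin r t i) := by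
    intro i h1 h2
    exact ((hCH _).mpr (Or.inl (Afin_mem_CC' r t h1 h2))).1
  have hcircB : ∀ i, 1 ≤ i → i ≤ t - 1 → Circuit K ↑(Bfin r t i) := by
    intro i h1 h2
    exact ((hCH _).mpr (Or.inr (Bfin_mem_CC'' r t hr h1 h2))).1
  -- choose circuit relations for the A_i
  have hlam' : ∀ i : ℕ, ∃ lam : ℕ → F, 1 ≤ i → i ≤ t →
      ((∀ c ∈ Afin r t i, lam c ≠ 0) ∧ ∑ c ∈ Afin r t i, lam c • φ c = 0) := by
    intro i
    by_cases h : 1 ≤ i ∧ i ≤ t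
    · obtain ⟨lam, h1, h2⟩ := rel_of_circuit hrep (Afin r t i) (hcircA i h.1 h.2)
        (by rw [card_Afin r t hr ht1 hrt]; omega)
      exact ⟨lam, fun _ _ => ⟨h1, h2⟩⟩
    · exact ⟨fun _ => 1, fun h1 h2 => absurd ⟨h1, h2⟩ h⟩
  choose lam hlam using hlam'
  have hmem1 : ∀ i, 2*t+1 ∈ Afin r t i := fun i => Finset.mem_union_right _ (by simp)
  have hmem2 : ∀ i, 2*t+2 ∈ Afin r t i := fun i => Finset.mem_union_right _ (by simp)
  have hCfin_subA : ∀ i, Cfin r t i ⊆ Afin r t i := fun i => Finset.subset_union_left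
  -- the split identity
  have hsplit : ∀ i, 1 ≤ i → i ≤ t →
      lam i (2*t+1) • φ (2*t+1) + lam i (2*t+2) • φ (2*t+2)
        = - ∑ c ∈ Cfin r t i, lam i c • φ c := by
    intro i h1 h2
    have hsum := (hlam i h1 h2).2
    have hdisj : Disjoint (Cfin r t i) ({2*t+1, 2*t+2} : Finset ℕ) := by
      rw [Finset.disjoint_left]
      intro x hx hx2
      have := Cfin_le r t i ht1 x hx
      simp only [Finset.mem_insert, Finset.mem_singleton] at hx2
      omega
    rw [Afin, Finset.sum_union hdisj,
      Finset.sum_pair (by omega : 2*t+1 ≠ 2*t+2)] at hsum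
    exact eq_neg_of_add_eq_zero_right hsum
  -- the determinant identity between consecutive A_i relations
  have hdet : ∀ i, 1 ≤ i → i + 1 ≤ t →
      lam (i+1) (2*t+1) * lam i (2*t+2) = lam i (2*t+1) * lam (i+1) (2*t+2) := by
    intro i h1 h2
    by_contra hne
    set d : F := lam i (2*t+1) * lam (i+1) (2*t+2) - lam (i+1) (2*t+1) * lam i (2*t+2)
      with hd_def
    have hd : d ≠ 0 := sub_ne_zero.mpr (Ne.symm hne)
    have hdv1 : d • φ (2*t+1) =
        lam (i+1) (2*t+2) • (lam i (2*t+1) • φ (2*t+1) + lam i (2*t+2) • φ (2*t+2))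
          - lam i (2*t+2) • (lam (i+1) (2*t+1) • φ (2*t+1) + lam (i+1) (2*t+2) • φ (2*t+2)) := by
      rw [hd_def]; module
    rw [hsplit i h1 (by omega), hsplit (i+1) (by omega) h2] at hdv1
    have hBsub1 : Cfin r t i ⊆ Bfin r t i := by
      rw [Bfin_eq_union r t hr h1]; exact Finset.subset_union_left
    have hBsub2 : Cfin r t (i+1) ⊆ Bfin r t i := by
      rw [Bfin_eq_union r t hr h1]; exact Finset.subset_union_right
    have hmemspan : φ (2*t+1) ∈ Submodule.span F (φ '' ↑(Bfin r t i)) := by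
      have heq : φ (2*t+1) = d⁻¹ • (d • φ (2*t+1)) := (inv_smul_smul₀ hd _).symm
      rw [heq, hdv1]
      refine Submodule.smul_mem _ _ (Submodule.sub_mem _ ?_ ?_) <;>
      · refine Submodule.smul_mem _ _ (Submodule.neg_mem _ (Submodule.sum_mem _ ?_))
        intro c hc
        refine Submodule.smul_mem _ _ (Submodule.subset_span ⟨c, ?_, rfl⟩)
        first
          | exact Finset.mem_coe.mpr (hBsub1 hc)
          | exact Finset.mem_coe.mpr (hBsub2 hc)
    -- but (2t+1) can replace any element of B_i to give a base
    have hxB : 2*t+1 ∉ Bfin r t i := by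
      intro h; have := Bfin_le r t i ht1 _ h; omega
    have heB : gfun t i 1 ∈ Bfin r t i :=
      Finset.mem_image_of_mem _ (by simp only [Finset.mem_Icc]; omega)
    have hbase : K.IsBase ↑(insert (2*t+1) ((Bfin r t i).erase (gfun t i 1))) := by
      apply hbase_of
      · rw [hE]
        intro x hx
        simp only [Finset.coe_insert, Set.mem_insert_iff, Finset.coe_erase,
          Set.mem_diff] at hx
        rcases hx with rfl | ⟨hx, -⟩
        · simp only [Set.mem_Icc]; omega
        · have := Bfin_le r t i ht1 x hx
          simp only [Set.mem_Icc]; omega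
      · rw [Finset.card_insert_of_notMem (fun h => hxB (Finset.mem_of_mem_erase h)),
          Finset.card_erase_of_mem heB, card_Bfin r t hrt]
        omega
      · intro hmem
        have h22 := CC'_mem_tt hmem
        simp only [Finset.coe_insert, Set.mem_insert_iff, Finset.coe_erase,
          Set.mem_diff, Finset.mem_coe] at h22
        rcases h22 with h | ⟨h, -⟩
        · omega
        · have := Bfin_le r t i ht1 _ h; omega
      · intro hmem
        have h21 := CC''_le ht1 hmem (2*t+1) (by
          rw [Finset.coe_insert]; exact Set.mem_insert _ _)
        omega
    exact not_mem_span_circuit hrep (Bfin r t i) (hcircB i h1 (by omega))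
      (by rw [card_Bfin r t hrt]; omega) (2*t+1) hxB (gfun t i 1) heB hbase hmemspan
  -- the chain of proportionality
  have hchain : ∀ i, 1 ≤ i → i ≤ t → ∃ γ : F, γ ≠ 0 ∧
      lam i (2*t+1) = γ * lam 1 (2*t+1) ∧ lam i (2*t+2) = γ * lam 1 (2*t+2) := by
    intro i hi
    induction i, hi using Nat.le_induction with
    | base =>
      intro _
      exact ⟨1, one_ne_zero, (one_mul _).symm, (one_mul _).symm⟩
    | succ n hn ih =>
      intro hnt
      obtain ⟨γ, hγ, ha, hb⟩ := ih (by omega)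
      have hdetn := hdet n hn hnt
      have han : lam n (2*t+1) ≠ 0 := (hlam n hn (by omega)).1 _ (hmem1 n)
      have han1 : lam (n+1) (2*t+1) ≠ 0 := (hlam (n+1) (by omega) hnt).1 _ (hmem1 (n+1))
      refine ⟨lam (n+1) (2*t+1) / lam n (2*t+1) * γ, mul_ne_zero (div_ne_zero han1 han) hγ,
        ?_, ?_⟩
      · rw [mul_assoc, ← ha]
        exact (div_mul_cancel₀ _ han).symm
      · rw [mul_assoc, ← hb, div_mul_eq_mul_div, hdetn, mul_div_cancel_left₀ _ han]
  -- final contradiction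
  obtain ⟨γ, hγ, hat, hbt⟩ := hchain t ht1 le_rfl
  have hUeq : Bfin r t t = Cfin r t t ∪ Cfin r t 1 := by
    rw [Bfin_eq_union r t hr ht1, Cfin_wrap]
  have hsub_t : Cfin r t t ⊆ Bfin r t t := by rw [hUeq]; exact Finset.subset_union_left
  have hsub_1 : Cfin r t 1 ⊆ Bfin r t t := by rw [hUeq]; exact Finset.subset_union_right
  have key : ∑ c ∈ Bfin r t t,
      ((if c ∈ Cfin r t t then lam t c else 0)
        - γ * (if c ∈ Cfin r t 1 then lam 1 c else 0)) • φ c = 0 := by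
    have expand : ∀ c : ℕ, ((if c ∈ Cfin r t t then lam t c else 0)
        - γ * (if c ∈ Cfin r t 1 then lam 1 c else 0)) • φ c
        = (if c ∈ Cfin r t t then lam t c • φ c else 0)
          - γ • (if c ∈ Cfin r t 1 then lam 1 c • φ c else 0) := by
      intro c
      by_cases h1 : c ∈ Cfin r t t <;> by_cases h2 : c ∈ Cfin r t 1 <;>
        simp [h1, h2, sub_smul, mul_smul]
    rw [Finset.sum_congr rfl (fun c _ => expand c), Finset.sum_sub_distrib,
      Finset.sum_ite_mem, Finset.inter_eq_right.mpr hsub_t, ← Finset.smul_sum,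
      Finset.sum_ite_mem, Finset.inter_eq_right.mpr hsub_1]
    have h1 := hsplit 1 le_rfl ht1
    have h2 := hsplit t ht1 le_rfl
    have h1' : ∑ c ∈ Cfin r t 1, lam 1 c • φ c
        = -(lam 1 (2*t+1) • φ (2*t+1) + lam 1 (2*t+2) • φ (2*t+2)) := by
      rw [h1, neg_neg]
    have h2' : ∑ c ∈ Cfin r t t, lam t c • φ c
        = -(lam t (2*t+1) • φ (2*t+1) + lam t (2*t+2) • φ (2*t+2)) := by
      rw [h2, neg_neg]
    rw [h1', h2', hat, hbt]
    module
  have hUE : (↑(Bfin r t t) : Set ℕ) ⊆ K.E := by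
    rw [hE]
    intro x hx
    have := Bfin_le r t t ht1 x hx
    simp only [Set.mem_Icc]; omega
  have hUbase : K.IsBase ↑(Bfin r t t) := by
    apply hbase_of _ hUE (card_Bfin r t hrt t)
    · intro hmem
      have h22 := CC'_mem_tt hmem
      have := Bfin_le r t t ht1 _ h22
      omega
    · exact Bfin_t_not_mem_CC'' r t hr ht hrt
  have hz := zero_of_indep hrep (Bfin r t t) hUbase.indep _ key (r-2)
    (hsub_1 (r_sub_two_mem_Cfin_one hr hrt))
  simp only [if_neg (r_sub_two_not_mem_Cfin_t hr ht hrt),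
    if_pos (r_sub_two_mem_Cfin_one hr hrt), zero_sub, neg_eq_zero] at hz
  exact (mul_ne_zero hγ
    ((hlam 1 le_rfl ht1).1 _ (hCfin_subA 1 (r_sub_two_mem_Cfin_one hr hrt)))) hz


end PaperLift
end
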